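/- arXiv:2005.13767 — 13 statements merged into one kernel-verified Lean document; each statement's English description precedes it below -/
import Mathlib

section
/- Let G be a topological group (no separation axiom assumed) that has a suitable set S. Then G is Hausdorff or G has at most two elements. -/
/-- A subset `S` of a topological group `G` is a *suitable set* for `G` if `S` is
discrete in its subspace topology, `S ∪ {1}` is closed in `G`, and the subgroup
generated by `S` is topologically dense in `G`. -/
def IsSuitable {G : Type*} [Group G] [TopologicalSpace G] (S : Set G) : Prop :=
  DiscreteTopology S ∧ IsClosed (S ∪ {1}) ∧ Dense (Subgroup.closure S : Set G)

/-- If a topological group (no separation axiom assumed) has a suitable set,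
then it is Hausdorff or has at most two elements. -/
theorem suitable_set_implies_hausdorff_or_card_le_two
    {G : Type*} [Group G] [TopologicalSpace G] [IsTopologicalGroup G]
    (S : Set G) (hS : IsSuitable S) :
    T2Space G ∨ ∃ a b : G, ∀ x : G, x = a ∨ x = b := by
  obtain ⟨hdisc, hclosed, hdense⟩ := hS
  by_cases hN : closure ({1} : Set G) = {1}
  · left
    exact IsTopologicalGroup.t2Space_iff_one_closed.mpr (closure_eq_iff_isClosed.mp hN)
  · right
    -- there is x ≠ 1 in the closure of {1}
    have h1 : (1 : G) ∈ closure ({1} : Set G) := subset_closure rfl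
    obtain ⟨x, hxN, hx1⟩ : ∃ x, x ∈ closure ({1} : Set G) ∧ x ≠ 1 := by
      by_contra h
      push_neg at h
      exact hN (Set.eq_singleton_iff_unique_mem.mpr ⟨h1, h⟩)
    -- translation lemma
    have hmul : ∀ g y : G, y ∈ closure ({1} : Set G) → g * y ∈ closure ({g} : Set G) := by
      intro g y hy
      have := map_mem_closure (continuous_mul_left g) hy (Set.mapsTo_image _ _)
      simpa using this
    have hinv : ∀ y : G, y ∈ closure ({1} : Set G) → y⁻¹ ∈ closure ({1} : Set G) := by
      intro y hy
      have := map_mem_closure continuous_inv hy (Set.mapsTo_image _ _)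
      simpa using this
    -- inseparability of s and s*y for y in closure {1}
    have hinsep : ∀ (s y : G), y ∈ closure ({1} : Set G) → Inseparable s (s * y) := by
      intro s y hy
      refine inseparable_iff_mem_closure.mpr ⟨?_, ?_⟩
      · have := hmul (s * y) y⁻¹ (hinv y hy)
        simpa [mul_assoc] using this
      · exact hmul s y hy
    -- N ⊆ S ∪ {1}
    have hNsub : closure ({1} : Set G) ⊆ S ∪ {1} := by
      apply closure_minimal _ hclosed
      intro z hz
      exact Or.inr hz
    -- key: every s ∈ S satisfies s * x = 1
    have hkey : ∀ s ∈ S, s * x = 1 := by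
      intro s hs
      -- s * x ∈ closure {s} ⊆ S ∪ {1}
      have hsx : s * x ∈ S ∪ {1} := by
        have h2 : closure ({s} : Set G) ⊆ S ∪ {1} :=
          closure_minimal (Set.singleton_subset_iff.mpr (Or.inl hs)) hclosed
        exact h2 (hmul s x hxN)
      rcases hsx with hsx | hsx
      · -- s and s*x both in S, inseparable in G hence in S, discrete ⇒ equal ⇒ x = 1, contra
        exfalso
        have hins : Inseparable s (s * x) := hinsep s x hxN
        have : Inseparable (⟨s, hs⟩ : S) (⟨s * x, hsx⟩ : S) :=
          (Topology.IsInducing.subtypeVal.inseparable_iff).mp hins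
        have heq : (⟨s, hs⟩ : S) = ⟨s * x, hsx⟩ := this.eq
        have : s = s * x := congrArg Subtype.val heq
        exact hx1 (by simpa using this.symm)
      · exact hsx
    -- hence S ⊆ closure {1}
    have hSN : S ⊆ closure ({1} : Set G) := by
      intro s hs
      have : s = x⁻¹ := eq_inv_of_mul_eq_one_left (hkey s hs)
      rw [this]
      exact hinv x hxN
    -- the subgroup generated by S is contained in the closed subgroup closure {1}
    have hsubgrp : (Subgroup.closure S : Set G) ⊆ closure ({1} : Set G) := by
      have : Subgroup.closure S ≤ (⊥ : Subgroup G).topologicalClosure := by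
        apply Subgroup.closure_le _ |>.mpr
        intro s hs
        simpa [Subgroup.topologicalClosure] using hSN hs
      intro g hg
      have := this hg
      simpa [Subgroup.topologicalClosure] using this
    -- so G = closure {1}
    have hG : ∀ g : G, g ∈ closure ({1} : Set G) := by
      intro g
      have := hdense g
      have h2 : closure (Subgroup.closure S : Set G) ⊆ closure ({1} : Set G) :=
        closure_minimal hsubgrp isClosed_closure
      exact h2 (by rw [hdense.closure_eq]; trivial)
    -- finally, every element is 1 or x
    refine ⟨1, x, fun g => ?_⟩
    rcases hNsub (hG g) with hg | hg
    · right
      have := hkey g hg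
      have hxx : x * x = 1 := hkey x (by rcases hNsub hxN with h | h; exact h; exact absurd h hx1)
      calc g = x⁻¹ := eq_inv_of_mul_eq_one_left this
        _ = x := (inv_eq_of_mul_eq_one_left hxx)
    · left; exact hg
end

section
/- Let G be a Hausdorff topological group in which {1} is a Gδ-set (i.e., G has countable pseudocharacter) and in which every closed discrete subspace is countable (i.e., G has countable extent). If G has a suitable set, then G is separable. -/
/-- The subgroup closure of a countable set is countable (as a set). -/
lemma countable_subgroupClosure {G : Type*} [Group G] {S : Set G} (hS : S.Countable) :
    (Subgroup.closure S : Set G).Countable := by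
  have hc : (S ∪ S⁻¹).Countable := hS.union (hS.preimage (inv_injective))
  have hsub : (Subgroup.closure S : Set G) ⊆
      Set.range (fun l : List ↥(S ∪ S⁻¹) => (l.map Subtype.val).prod) := by
    intro x hx
    have hx' : x ∈ Submonoid.closure (S ∪ S⁻¹) := by
      rw [← Subgroup.closure_toSubmonoid] at *
      exact hx
    obtain ⟨l, hl, hprod⟩ := Submonoid.exists_list_of_mem_closure hx'
    refine ⟨l.attach.map fun y => ⟨y.1, hl y.1 y.2⟩, ?_⟩
    simp only [List.map_map]
    simpa using hprod
  haveI : Countable ↥(S ∪ S⁻¹) := hc.to_subtype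
  exact (Set.countable_range _).mono hsub

/-- A Hausdorff topological group of countable pseudocharacter (`{1}` is Gδ) and
countable extent (every closed discrete subspace is countable) which has a
suitable set is separable. -/
theorem separable_of_suitable_set_of_countable_extent_and_pseudocharacter
    {G : Type*} [Group G] [TopologicalSpace G] [IsTopologicalGroup G] [T2Space G]
    (hGδ : IsGδ ({1} : Set G))
    (hext : ∀ D : Set G, IsClosed D → DiscreteTopology D → D.Countable)
    (S : Set G) (hS : IsSuitable S) :
    TopologicalSpace.SeparableSpace G := by
  obtain ⟨hdisc, hclosed, hdense⟩ := hS
  -- S is countable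
  obtain ⟨T, hTopen, hTcount, hTeq⟩ := hGδ
  have hScount : S.Countable := by
    have key : S ⊆ {1} ∪ ⋃ U ∈ T, S \ U := by
      intro x hx
      by_cases hx1 : x = 1
      · exact Or.inl hx1
      · right
        have : x ∉ ⋂₀ T := by rw [← hTeq]; simpa using hx1
        obtain ⟨U, hUT, hxU⟩ := by simpa [Set.mem_sInter] using this
        exact Set.mem_biUnion hUT ⟨hx, hxU⟩
    have hcount : ({1} ∪ ⋃ U ∈ T, S \ U : Set G).Countable := by
      refine (Set.countable_singleton 1).union ?_
      refine (Set.Countable.biUnion hTcount fun U hU => ?_)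
      have h1U : (1 : G) ∈ U := by
        have : (1 : G) ∈ ⋂₀ T := by rw [← hTeq]; simp
        exact this U hU
      have hclosedU : IsClosed (S \ U) := by
        have : S \ U = (S ∪ {1}) ∩ Uᶜ := by
          ext x; simp only [Set.mem_diff, Set.mem_inter_iff, Set.mem_union,
            Set.mem_singleton_iff, Set.mem_compl_iff]
          constructor
          · rintro ⟨hxS, hxU⟩; exact ⟨Or.inl hxS, hxU⟩
          · rintro ⟨hx, hxU⟩
            rcases hx with h | h
            · exact ⟨h, hxU⟩
            · exact absurd (h ▸ h1U) hxU
        rw [this]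
        exact hclosed.inter (hTopen U hU).isClosed_compl
      have hdiscU : DiscreteTopology ↥(S \ U) :=
        DiscreteTopology.of_subset hdisc Set.diff_subset
      exact hext _ hclosedU hdiscU
    exact hcount.mono key
  exact ⟨⟨(Subgroup.closure S : Set G), countable_subgroupClosure hScount, hdense⟩⟩
end

section
/- Let G be a nondiscrete Hausdorff topological group and let U be a nonempty open subset of G such that the subgroup generated by U is all of G. Then every point x ∈ U has an open neighborhood V with V ⊆ U such that the subgroup generated by U ∖ closure(V) is all of G. -/
/-- In a nondiscrete topological group, every open set containing `x` contains a point `≠ x`. -/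
lemma aux_exists_ne_of_not_discrete {G : Type*} [Group G] [TopologicalSpace G]
    [IsTopologicalGroup G] (hnd : ¬ DiscreteTopology G) {O : Set G} (hO : IsOpen O)
    {x : G} (hx : x ∈ O) : ∃ a ∈ O, a ≠ x := by
  by_contra h
  push_neg at h
  have hOx : O = {x} := Set.Subset.antisymm (fun a ha => h a ha) (by simpa using hx)
  apply hnd
  apply discreteTopology_iff_isOpen_singleton_one.mpr
  have : IsOpen ((fun g => g * x⁻¹) '' O) := (Homeomorph.mulRight x⁻¹).isOpen_image.mpr hO
  have himg : (fun g => g * x⁻¹) '' O = {1} := by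
    rw [hOx]; simp
  rwa [himg] at this

/-- In a nondiscrete Hausdorff topological group, if a nonempty open set `U`
generates `G`, then every `x ∈ U` has an open neighborhood `V ⊆ U` such that
`U \ closure V` still generates `G`. -/
theorem exists_open_nhd_removal_still_generates
    {G : Type*} [Group G] [TopologicalSpace G] [IsTopologicalGroup G] [T2Space G]
    (hnd : ¬ DiscreteTopology G)
    (U : Set G) (hUopen : IsOpen U) (hUne : U.Nonempty)
    (hUgen : Subgroup.closure U = ⊤) :
    ∀ x ∈ U, ∃ V : Set G, IsOpen V ∧ x ∈ V ∧ V ⊆ U ∧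
      Subgroup.closure (U \ closure V) = ⊤ := by
  intro x hx
  -- find an open O ∋ x, O ⊆ U, with a*b⁻¹*x ∈ U for all a,b ∈ O
  have hc : ContinuousAt (fun p : G × G => p.1 * p.2⁻¹ * x) (x, x) := by fun_prop
  have hmem : U ∈ nhds ((fun p : G × G => p.1 * p.2⁻¹ * x) (x, x)) := by
    simpa using hUopen.mem_nhds hx
  have hpre := hc hmem
  rw [nhds_prod_eq, Filter.mem_map, Filter.mem_prod_iff] at hpre
  obtain ⟨s, hs, t, ht, hst⟩ := hpre
  obtain ⟨O₁, hO₁s, hO₁open, hxO₁⟩ := mem_nhds_iff.mp hs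
  obtain ⟨O₂, hO₂t, hO₂open, hxO₂⟩ := mem_nhds_iff.mp ht
  set O : Set G := O₁ ∩ O₂ ∩ U with hOdef
  have hOopen : IsOpen O := (hO₁open.inter hO₂open).inter hUopen
  have hxO : x ∈ O := ⟨⟨hxO₁, hxO₂⟩, hx⟩
  have hOU : ∀ a ∈ O, ∀ b ∈ O, a * b⁻¹ * x ∈ U := by
    intro a ha b hb
    exact hst (Set.mk_mem_prod (hO₁s ha.1.1) (hO₂t hb.1.2))
  -- pick a ≠ b in O, both ≠ x
  obtain ⟨a, haO, hax⟩ := aux_exists_ne_of_not_discrete hnd hOopen hxO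
  obtain ⟨b, hbO', hbx⟩ := aux_exists_ne_of_not_discrete hnd
    (hOopen.sdiff isClosed_singleton) (⟨hxO, fun h => hax.symm h⟩ : x ∈ O \ {a})
  have hba : b ≠ a := hbO'.2
  have hbO : b ∈ O := hbO'.1
  set p : G := a * b⁻¹ * x with hpdef
  have hpU : p ∈ U := hOU a haO b hbO
  have hpx : p ≠ x := by
    intro h
    apply hba
    have : a * b⁻¹ = 1 := by
      have := mul_right_cancel (h.trans (one_mul x).symm)
      exact this
    exact (mul_inv_eq_one.mp this).symm
  obtain ⟨A, B, hAopen, hBopen, hxA, hpB, hAB⟩ := t2_separation hpx.symm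
  -- the good open set W
  set W : Set G := (U \ {a, b}) ∩ A ∩ ((fun g => a * b⁻¹ * g) ⁻¹' (U ∩ B)) with hWdef
  have hWopen : IsOpen W := by
    apply IsOpen.inter
    · exact (hUopen.sdiff (Set.toFinite ({a, b} : Set G)).isClosed).inter hAopen
    · exact (hUopen.inter hBopen).preimage (by fun_prop)
  have hxW : x ∈ W := by
    refine ⟨⟨⟨hx, ?_⟩, hxA⟩, ⟨hpU, hpB⟩⟩
    simp only [Set.mem_insert_iff, Set.mem_singleton_iff]
    push_neg
    exact ⟨fun h => hax h.symm, fun h => hbx h.symm⟩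
  -- regularity: choose V with closure V ⊆ W
  obtain ⟨C, hCnhds, hCclosed, hCW⟩ := exists_mem_nhds_isClosed_subset (hWopen.mem_nhds hxW)
  set V : Set G := interior C with hVdef
  have hVopen : IsOpen V := isOpen_interior
  have hxV : x ∈ V := mem_interior_iff_mem_nhds.mpr hCnhds
  have hclV : closure V ⊆ W := le_trans (closure_minimal interior_subset hCclosed) hCW
  have hVU : V ⊆ U := fun g hg => (hclV (subset_closure hg)).1.1.1
  refine ⟨V, hVopen, hxV, hVU, ?_⟩
  -- now show generation
  set H : Subgroup G := Subgroup.closure (U \ closure V) with hHdef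
  have hUH : U ⊆ (H : Set G) := by
    intro u hu
    by_cases hucl : u ∈ closure V
    · have haS : a ∈ U \ closure V := by
        refine ⟨haO.2, fun h => (hclV h).1.1.2 (Set.mem_insert a {b})⟩
      have hbS : b ∈ U \ closure V := by
        refine ⟨hbO.2, fun h => (hclV h).1.1.2 (Set.mem_insert_of_mem a rfl)⟩
      have htuS : a * b⁻¹ * u ∈ U \ closure V := by
        have h1 : a * b⁻¹ * u ∈ U ∩ B := (hclV hucl).2
        refine ⟨h1.1, fun h => ?_⟩
        have h2 : a * b⁻¹ * u ∈ A := (hclV h).1.2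
        exact Set.disjoint_left.mp hAB h2 h1.2
      have haH : a ∈ H := Subgroup.subset_closure haS
      have hbH : b ∈ H := Subgroup.subset_closure hbS
      have htuH : a * b⁻¹ * u ∈ H := Subgroup.subset_closure htuS
      have : b * a⁻¹ * (a * b⁻¹ * u) ∈ H :=
        H.mul_mem (H.mul_mem hbH (H.inv_mem haH)) htuH
      have heq : b * a⁻¹ * (a * b⁻¹ * u) = u := by group
      rwa [heq] at this
    · exact Subgroup.subset_closure ⟨hu, hucl⟩
  rw [eq_top_iff, ← hUgen]
  exact Subgroup.closure_le H |>.mpr hUH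
end

section
/- Every countable Hausdorff topological group G has a closed suitable set that generates G algebraically; that is, there exists a subset S of G such that S is closed in G, S is discrete in its subspace topology, and the subgroup generated by S equals G. -/
set_option linter.unusedSectionVars false

open Set Function

section Aux

variable {G : Type*} [Group G] [TopologicalSpace G] [IsTopologicalGroup G]

private lemma inv_mem_symm {R : Set G} (hR : R⁻¹ = R) {a : G} (ha : a ∈ R) : a⁻¹ ∈ R := by
  rw [← hR]; simpa using ha

private lemma exists_symm_half {U : Set G} (hU : IsOpen U) (h1 : (1:G) ∈ U) :
    ∃ V : Set G, IsOpen V ∧ (1:G) ∈ V ∧ V⁻¹ = V ∧ ∀ a ∈ V, ∀ b ∈ V, a * b ∈ U := by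
  obtain ⟨V, hVo, hV1, hVU⟩ := exists_open_nhds_one_mul_subset (hU.mem_nhds h1)
  refine ⟨V ∩ V⁻¹, hVo.inter hVo.inv, ⟨hV1, by simpa using hV1⟩, ?_, ?_⟩
  · ext z
    simp only [Set.mem_inter_iff, Set.mem_inv, inv_inv]
    tauto
  · intro a ha b hb
    exact hVU (Set.mul_mem_mul ha.1 hb.1)

/-- products of four elements of `R` -/
private def S4 (R : Set G) : Set G := {g | ∃ a ∈ R, ∃ b ∈ R, ∃ c ∈ R, ∃ d ∈ R, g = a * b * c * d}

private lemma one_mem_S4 {R : Set G} (h1 : (1:G) ∈ R) : (1:G) ∈ S4 R :=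
  ⟨1, h1, 1, h1, 1, h1, 1, h1, by group⟩

private lemma S4_inv {R : Set G} (hR : R⁻¹ = R) {g : G} (hg : g ∈ S4 R) : g⁻¹ ∈ S4 R := by
  obtain ⟨a, ha, b, hb, c, hc, d, hd, rfl⟩ := hg
  exact ⟨d⁻¹, inv_mem_symm hR hd, c⁻¹, inv_mem_symm hR hc, b⁻¹, inv_mem_symm hR hb,
    a⁻¹, inv_mem_symm hR ha, by group⟩

/-- "A is covered by the translates f • V, f ∈ F" -/
private def Cov (F : Finset G) (V A : Set G) : Prop := ∀ a ∈ A, ∃ f ∈ F, f⁻¹ * a ∈ V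

/-- Points with locally-finite neighbourhoods give a closed discrete set. -/
private lemma closed_discrete_of_locally_finite [T1Space G] {S : Set G}
    (h : ∀ y : G, ∃ U : Set G, IsOpen U ∧ y ∈ U ∧ (U ∩ S).Finite) :
    IsClosed S ∧ DiscreteTopology S := by
  constructor
  · rw [← isOpen_compl_iff, isOpen_iff_mem_nhds]
    intro y hy
    obtain ⟨U, hUo, hyU, hfin⟩ := h y
    have hclosed : IsClosed (U ∩ S) := hfin.isClosed
    have hmem : U ∩ (U ∩ S)ᶜ ∈ nhds y :=
      (hUo.inter hclosed.isOpen_compl).mem_nhds ⟨hyU, fun hc => hy hc.2⟩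
    exact Filter.mem_of_superset hmem (fun z hz hzS => hz.2 ⟨hz.1, hzS⟩)
  · rw [discreteTopology_iff_isOpen_singleton]
    rintro ⟨y, hyS⟩
    obtain ⟨U, hUo, hyU, hfin⟩ := h y
    have hclosed : IsClosed ((U ∩ S) \ {y}) := (hfin.subset Set.diff_subset).isClosed
    have hO : IsOpen (U ∩ ((U ∩ S) \ {y})ᶜ) := hUo.inter hclosed.isOpen_compl
    rw [isOpen_induced_iff]
    refine ⟨U ∩ ((U ∩ S) \ {y})ᶜ, hO, ?_⟩
    ext ⟨z, hzS⟩
    simp only [Set.mem_preimage, Set.mem_singleton_iff, Subtype.mk_eq_mk]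
    constructor
    · rintro ⟨hzU, hznot⟩
      by_contra hne
      have : z ∈ (U ∩ S) \ {y} := ⟨⟨hzU, hzS⟩, by simpa [Subtype.ext_iff] using hne⟩
      exact hznot this
    · rintro rfl
      exact ⟨hyU, fun hc => hc.2 rfl⟩

/-- The common recursion skeleton. -/
private lemma skeleton [T1Space G] (x : ℕ → G) (hx : Function.Surjective x)
    (W : ℕ → Set G) (hWo : ∀ k, IsOpen (W k)) (hWx : ∀ k, x k ∈ W k)
    (hesc : ∀ n (g : G), ∃ a : G, ∀ k ≤ n, a ∉ W k ∧ g * a ∉ W k) :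
    ∃ S : Set G, IsClosed S ∧ DiscreteTopology S ∧ Subgroup.closure S = ⊤ := by
  choose a ha using fun n => hesc n (x n)
  set S : Set G := Set.range a ∪ Set.range (fun n => x n * a n) with hS
  have hfin : ∀ k, (W k ∩ S).Finite := by
    intro k
    have hsub : W k ∩ S ⊆ (a '' {n | n < k}) ∪ ((fun n => x n * a n) '' {n | n < k}) := by
      rintro z ⟨hzW, hzS⟩
      rcases hzS with ⟨n, rfl⟩ | ⟨n, rfl⟩
      · left
        refine ⟨n, ?_, rfl⟩
        by_contra hnk
        exact (ha n k (le_of_not_gt hnk)).1 hzW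
      · right
        refine ⟨n, ?_, rfl⟩
        by_contra hnk
        exact (ha n k (le_of_not_gt hnk)).2 hzW
    exact (((Set.finite_Iio k).image a).union ((Set.finite_Iio k).image _)).subset hsub
  obtain ⟨hcl, hdt⟩ := closed_discrete_of_locally_finite (S := S) (fun y => by
    obtain ⟨k, rfl⟩ := hx y
    exact ⟨W k, hWo k, hWx k, hfin k⟩)
  refine ⟨S, hcl, hdt, ?_⟩
  rw [Subgroup.eq_top_iff']
  intro g
  obtain ⟨k, rfl⟩ := hx g
  have h1 : x k * a k ∈ Subgroup.closure S :=
    Subgroup.subset_closure (Or.inr ⟨k, rfl⟩)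
  have h2 : a k ∈ Subgroup.closure S :=
    Subgroup.subset_closure (Or.inl ⟨k, rfl⟩)
  have : x k = (x k * a k) * (a k)⁻¹ := by group
  rw [this]
  exact mul_mem h1 (inv_mem h2)

/-- In an infinite T2 group, for each `L` there is a symmetric open neighbourhood `R` of 1
such that no `L` translates of `S4 R` cover the group. -/
private lemma exists_small_nbhd [T2Space G] (L : ℕ) (hbig : ∃ s : Finset G, s.card = L + 1) :
    ∃ R : Set G, IsOpen R ∧ (1:G) ∈ R ∧ R⁻¹ = R ∧
      ∀ F : Finset G, Cov F (S4 R) univ → L < F.card := by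
  classical
  obtain ⟨s, hs⟩ := hbig
  set T : Set G := {t | ∃ u ∈ s, ∃ v ∈ s, u ≠ v ∧ t = u⁻¹ * v} with hT
  have hTfin : T.Finite := by
    have hsub : T ⊆ (fun p : G × G => p.1⁻¹ * p.2) '' ((s : Set G) ×ˢ (s : Set G)) := by
      rintro t ⟨u, hu, v, hv, huv, rfl⟩
      exact ⟨(u, v), ⟨hu, hv⟩, rfl⟩
    exact (((s.finite_toSet).prod (s.finite_toSet)).image _).subset hsub
  have h1T : (1:G) ∉ T := by
    rintro ⟨u, hu, v, hv, huv, h⟩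
    apply huv
    have : u * 1 = u * (u⁻¹ * v) := by rw [← h]
    simpa [mul_assoc] using this
  have hU : IsOpen Tᶜ := hTfin.isClosed.isOpen_compl
  obtain ⟨V1, hV1o, hV11, hV1sym, hV1⟩ := exists_symm_half hU h1T
  obtain ⟨V2, hV2o, hV21, hV2sym, hV2⟩ := exists_symm_half hV1o hV11
  obtain ⟨R, hRo, hR1, hRsym, hRm⟩ := exists_symm_half hV2o hV21
  have h4 : ∀ g ∈ S4 R, g ∈ V1 := by
    rintro g ⟨p1, h1, p2, h2, p3, h3, p4, h4, rfl⟩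
    have e : p1 * p2 * p3 * p4 = (p1 * p2) * (p3 * p4) := by group
    rw [e]
    exact hV2 _ (hRm _ h1 _ h2) _ (hRm _ h3 _ h4)
  refine ⟨R, hRo, hR1, hRsym, ?_⟩
  intro F hF
  by_contra hle
  push_neg at hle
  have maps : ∀ u ∈ s, ∃ f ∈ F, f⁻¹ * u ∈ S4 R := fun u _ => hF u (mem_univ u)
  choose! f hfF hfmem using maps
  obtain ⟨u, hu, v, hv, huv, hfe⟩ :=
    Finset.exists_ne_map_eq_of_card_lt_of_maps_to (by rw [hs]; exact Nat.lt_succ_of_le hle) hfF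
  have hA : (f u)⁻¹ * u ∈ S4 R := hfmem u hu
  have hB : (f u)⁻¹ * v ∈ S4 R := hfe ▸ hfmem v hv
  have hAi : ((f u)⁻¹ * u)⁻¹ ∈ S4 R := S4_inv hRsym hA
  have hmem : ((f u)⁻¹ * u)⁻¹ * ((f u)⁻¹ * v) ∈ Tᶜ := hV1 _ (h4 _ hAi) _ (h4 _ hB)
  have heq : ((f u)⁻¹ * u)⁻¹ * ((f u)⁻¹ * v) = u⁻¹ * v := by group
  rw [heq] at hmem
  exact hmem ⟨u, hu, v, hv, huv, rfl⟩

/-- greedy construction of an `S4 R`-separated list of given length -/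
private lemma exists_separated_list (L : ℕ) (R : Set G) (hRsym : R⁻¹ = R)
    (hbig : ∀ F : Finset G, Cov F (S4 R) univ → L < F.card) :
    ∃ ys : List G, ys.length = L ∧ ys.Pairwise (fun u v => u⁻¹ * v ∉ S4 R) := by
  classical
  have step : ∀ m, m ≤ L → ∃ ys : List G, ys.length = m ∧
      ys.Pairwise (fun u v => u⁻¹ * v ∉ S4 R) := by
    intro m
    induction m with
    | zero => exact fun _ => ⟨[], rfl, List.Pairwise.nil⟩
    | succ m ih =>
      intro hm
      obtain ⟨ys, hlen, hpw⟩ := ih (Nat.le_of_succ_le hm)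
      have : ∃ z : G, ∀ u ∈ ys, u⁻¹ * z ∉ S4 R := by
        by_contra hno
        push_neg at hno
        have hcov : Cov ys.toFinset (S4 R) univ := by
          intro a _
          obtain ⟨u, hu, hmem⟩ := hno a
          exact ⟨u, List.mem_toFinset.mpr hu, hmem⟩
        have := hbig _ hcov
        have hcard : ys.toFinset.card ≤ ys.length := ys.toFinset_card_le
        omega
      obtain ⟨z, hz⟩ := this
      refine ⟨z :: ys, by simpa using hlen, ?_⟩
      rw [List.pairwise_cons]
      refine ⟨?_, hpw⟩
      intro u hu hmem
      exact hz u hu (by simpa using S4_inv hRsym hmem)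
  exact step L le_rfl

/-- The key covering-number inequality via buffered disjoint translates. -/
private lemma buffer (R V : Set G) (hRsym : R⁻¹ = R) (hVsym : V⁻¹ = V) (hVR : V ⊆ R)
    (h1R : (1:G) ∈ R)
    (ys : List G) (hys : ys.Pairwise (fun u v => u⁻¹ * v ∉ S4 R))
    (F : Finset G) (hF : Cov F V univ) (c : ℕ)
    (hc : ∀ F' : Finset G, Cov F' V R → c ≤ F'.card) :
    ys.length * c ≤ F.card := by
  classical
  set Fu : G → Finset G := fun u => F.filter (fun f => ∃ v ∈ V, ∃ r ∈ R, f * v = u * r) with hFu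
  -- (i) each Fu u gives a cover of R after translation
  have hcov : ∀ u : G, c ≤ (Fu u).card := by
    intro u
    have hcover : Cov ((Fu u).image (fun f => u⁻¹ * f)) V R := by
      intro r hr
      obtain ⟨f, hfF, hfv⟩ := hF (u * r) (mem_univ _)
      have hfFu : f ∈ Fu u := by
        rw [hFu]
        refine Finset.mem_filter.mpr ⟨hfF, ⟨f⁻¹ * (u * r), hfv, r, hr, by group⟩⟩
      refine ⟨u⁻¹ * f, Finset.mem_image_of_mem _ hfFu, ?_⟩
      have : (u⁻¹ * f)⁻¹ * r = f⁻¹ * (u * r) := by group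
      rw [this]; exact hfv
    calc c ≤ ((Fu u).image (fun f => u⁻¹ * f)).card := hc _ hcover
      _ ≤ (Fu u).card := Finset.card_image_le
  -- symmetry of the separation relation
  have hsymm : Symmetric (fun u v : G => u⁻¹ * v ∉ S4 R) := by
    intro u v h hmem
    exact h (by simpa using S4_inv hRsym hmem)
  have hsep : ∀ u ∈ ys, ∀ v ∈ ys, u ≠ v → u⁻¹ * v ∉ S4 R := by
    intro u hu v hv huv
    haveI : Std.Symm (fun u v : G => u⁻¹ * v ∉ S4 R) := ⟨fun a b h => hsymm h⟩
    exact hys.forall hu hv huv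
  -- (ii) disjointness
  have hdisj : ∀ u ∈ ys.toFinset, ∀ v ∈ ys.toFinset, u ≠ v → Disjoint (Fu u) (Fu v) := by
    intro u hu v hv huv
    rw [Finset.disjoint_left]
    intro f hfu hfv
    obtain ⟨-, v1, hv1, r1, hr1, e1⟩ := Finset.mem_filter.mp hfu
    obtain ⟨-, v2, hv2, r2, hr2, e2⟩ := Finset.mem_filter.mp hfv
    have hu' : u = f * v1 * r1⁻¹ := by rw [e1]; group
    have hv' : v = f * v2 * r2⁻¹ := by rw [e2]; group
    have : u⁻¹ * v ∈ S4 R := by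
      refine ⟨r1, hr1, v1⁻¹, hVR (by rw [← hVsym]; simpa using hv1),
        v2, hVR hv2, r2⁻¹, inv_mem_symm hRsym hr2, ?_⟩
      rw [hu', hv']; group
    exact hsep u (List.mem_toFinset.mp hu) v (List.mem_toFinset.mp hv) huv this
  -- (iii) nodup
  have hnd : ys.Nodup := by
    refine hys.imp ?_
    intro u v hmem
    intro huv
    apply hmem
    rw [huv]
    simpa using one_mem_S4 h1R
  have hcardt : ys.toFinset.card = ys.length := List.toFinset_card_of_nodup hnd
  calc ys.length * c = ∑ _u ∈ ys.toFinset, c := by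
        rw [Finset.sum_const, smul_eq_mul, hcardt, Nat.mul_comm]
    _ ≤ ∑ u ∈ ys.toFinset, (Fu u).card := Finset.sum_le_sum (fun u _ => hcov u)
    _ = (ys.toFinset.biUnion Fu).card := (Finset.card_biUnion hdisj).symm
    _ ≤ F.card := Finset.card_le_card (Finset.biUnion_subset.mpr
        (fun u _ => Finset.filter_subset _ _))

private lemma myGeomSumTwo (m : ℕ) : ∑ k ∈ Finset.range m, 2 ^ k = 2 ^ m - 1 := by
  induction m with
  | zero => simp
  | succ m ih =>
    rw [Finset.sum_range_succ, ih]
    have : 1 ≤ 2 ^ m := Nat.one_le_two_pow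
    have h2 : (2:ℕ) ^ (m+1) = 2 ^ m + 2 ^ m := by ring
    omega

private lemma sum_bound (n C : ℕ) (c : ℕ → ℕ) (hC : 1 ≤ C)
    (h : ∀ k ≤ n, 2 ^ (k + 2) * c k ≤ C) :
    ∑ k ∈ Finset.range (n + 1), 2 * c k < C := by
  have key : 2 ^ (n + 2) * ∑ k ∈ Finset.range (n + 1), 2 * c k ≤ (2 ^ (n + 2) - 2) * C := by
    rw [Finset.mul_sum]
    have hterm : ∀ k ∈ Finset.range (n + 1),
        2 ^ (n + 2) * (2 * c k) ≤ 2 ^ (n + 1 - k) * C := by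
      intro k hk
      have hkn : k ≤ n := Nat.lt_succ_iff.mp (Finset.mem_range.mp hk)
      have hexp : 2 ^ (n + 2) * 2 = 2 ^ (n + 1 - k) * 2 ^ (k + 2) := by
        rw [← pow_succ, ← pow_add]
        congr 1
        omega
      calc 2 ^ (n + 2) * (2 * c k) = (2 ^ (n + 2) * 2) * c k := by ring
        _ = 2 ^ (n + 1 - k) * (2 ^ (k + 2) * c k) := by rw [hexp]; ring
        _ ≤ 2 ^ (n + 1 - k) * C := Nat.mul_le_mul_left _ (h k hkn)
    calc ∑ k ∈ Finset.range (n + 1), 2 ^ (n + 2) * (2 * c k)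
        ≤ ∑ k ∈ Finset.range (n + 1), 2 ^ (n + 1 - k) * C := Finset.sum_le_sum hterm
      _ = (∑ k ∈ Finset.range (n + 1), 2 ^ (n + 1 - k)) * C := by rw [Finset.sum_mul]
      _ = (2 ^ (n + 2) - 2) * C := by
          congr 1
          have hre : ∑ k ∈ Finset.range (n + 1), 2 ^ (n + 1 - k)
              = ∑ k ∈ Finset.range (n + 1), 2 ^ (k + 1) := by
            have := Finset.sum_range_reflect (fun j => (2:ℕ) ^ (j + 1)) (n + 1)
            rw [← this]
            apply Finset.sum_congr rfl
            intro k hk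
            have hkn : k ≤ n := Nat.lt_succ_iff.mp (Finset.mem_range.mp hk)
            congr 1
            omega
          rw [hre]
          have e1 : ∑ k ∈ Finset.range (n + 1), (2:ℕ) ^ (k + 1)
              = (∑ k ∈ Finset.range (n + 1), (2:ℕ) ^ k) * 2 := by
            rw [Finset.sum_mul]
            apply Finset.sum_congr rfl
            intro k _
            rw [pow_succ]
          rw [e1, myGeomSumTwo]
          have h1 : 1 ≤ (2:ℕ) ^ (n + 1) := Nat.one_le_two_pow
          have h2 : (2:ℕ) ^ (n + 2) = 2 ^ (n + 1) * 2 := by rw [pow_succ]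
          omega
  have hlt : (2 ^ (n + 2) - 2) * C < 2 ^ (n + 2) * C := by
    have h2 : (2:ℕ) ≤ 2 ^ (n + 2) := by
      calc (2:ℕ) = 2 ^ 1 := by norm_num
        _ ≤ 2 ^ (n + 2) := Nat.pow_le_pow_right (by norm_num) (by omega)
    have := Nat.sub_lt (show 0 < 2 ^ (n+2) by positivity) (show (0:ℕ) < 2 by norm_num)
    exact Nat.mul_lt_mul_of_lt_of_le this le_rfl hC
  exact Nat.lt_of_mul_lt_mul_left (lt_of_le_of_lt key hlt)

end Aux

/-- Every countable Hausdorff topological group has a closed discrete subset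
generating the whole group algebraically (a closed suitable set generating `G`). -/
theorem countable_group_has_closed_generating_suitable_set
    {G : Type*} [Group G] [TopologicalSpace G] [IsTopologicalGroup G] [T2Space G]
    [Countable G] :
    ∃ S : Set G, IsClosed S ∧ DiscreteTopology S ∧ Subgroup.closure S = ⊤ := by
  classical
  by_cases hdisc : IsOpen ({1} : Set G)
  · -- discrete case : take S = univ
    have hsing : ∀ g : G, IsOpen ({g} : Set G) := by
      intro g
      have himg := (Homeomorph.mulLeft g).isOpenMap _ hdisc
      simpa using himg
    obtain ⟨hcl, hdt⟩ := closed_discrete_of_locally_finite (S := (univ : Set G))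
      (fun y => ⟨{y}, hsing y, rfl, (Set.finite_singleton y).inter_of_left _⟩)
    exact ⟨univ, hcl, hdt, Subgroup.closure_univ⟩
  · -- non-discrete case
    have hinf : Infinite G := by
      by_contra hfin
      rw [not_infinite_iff_finite] at hfin
      have : IsClosed ({1}ᶜ : Set G) := (Set.toFinite _).isClosed
      have h2 := this.isOpen_compl
      rw [compl_compl] at h2
      exact hdisc h2
    obtain ⟨x, hx⟩ := exists_surjective_nat G
    by_cases hTB : ∀ V : Set G, IsOpen V → (1:G) ∈ V → ∃ F : Finset G, Cov F V univ
    · -- totally bounded case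
      have hR : ∀ k : ℕ, ∃ R : Set G, IsOpen R ∧ (1:G) ∈ R ∧ R⁻¹ = R ∧
          ∀ F : Finset G, Cov F (S4 R) univ → 2 ^ (k + 2) < F.card :=
        fun k => exists_small_nbhd (2 ^ (k + 2)) (Infinite.exists_subset_card_eq G _)
      choose R hRo hR1 hRsym hRbig using hR
      apply skeleton x hx (fun k => (fun h => (x k)⁻¹ * h) ⁻¹' (R k))
        (fun k => (hRo k).preimage (continuous_const.mul continuous_id))
        (fun k => by simp [hR1 k])
      intro n g
      by_contra hno
      push_neg at hno
      -- the common fine scale V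
      set O : Set G := ⋂ k ∈ Finset.range (n + 1), R k with hO
      have hOo : IsOpen O := isOpen_biInter_finset (fun k _ => hRo k)
      have hO1 : (1:G) ∈ O := Set.mem_biInter (fun k _ => hR1 k)
      obtain ⟨V, hVo, hV1, hVsym, hVmul⟩ := exists_symm_half hOo hO1
      have hVO : V ⊆ O := fun a haV => by simpa using hVmul a haV 1 hV1
      have hVR : ∀ k ≤ n, V ⊆ R k := by
        intro k hk a haV
        have := hVO haV
        rw [hO] at this
        exact Set.mem_iInter₂.mp this k (Finset.mem_range.mpr (Nat.lt_succ_of_le hk))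
      -- minimal covers
      have hnon : ∀ A : Set G, {m | ∃ F : Finset G, F.card = m ∧ Cov F V A}.Nonempty := by
        intro A
        obtain ⟨F, hF⟩ := hTB V hVo hV1
        exact ⟨F.card, F, rfl, fun a ha => hF a (mem_univ a)⟩
      set cN : Set G → ℕ := fun A => sInf {m | ∃ F : Finset G, F.card = m ∧ Cov F V A}
        with hcN
      have hmem : ∀ A : Set G, ∃ F : Finset G, F.card = cN A ∧ Cov F V A :=
        fun A => Nat.sInf_mem (hnon A)
      have hle : ∀ (A : Set G) (F : Finset G), Cov F V A → cN A ≤ F.card :=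
        fun A F hF => Nat.sInf_le ⟨F, rfl, hF⟩
      obtain ⟨F0, hF0card, hF0⟩ := hmem univ
      have hC1 : 1 ≤ cN univ := by
        by_contra hc0
        push_neg at hc0
        interval_cases h : cN univ
        obtain ⟨F, hFcard, hF⟩ := hmem univ
        rw [h] at hFcard
        obtain ⟨f, hf, -⟩ := hF 1 (mem_univ 1)
        rw [Finset.card_eq_zero.mp hFcard] at hf
        exact absurd hf (Finset.notMem_empty f)
      -- buffer estimates
      have hbuf : ∀ k ≤ n, 2 ^ (k + 2) * cN (R k) ≤ cN univ := by
        intro k hk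
        obtain ⟨ys, hyslen, hyspw⟩ := exists_separated_list (2 ^ (k + 2)) (R k)
          (hRsym k) (hRbig k)
        have := buffer (R k) V (hRsym k) hVsym (hVR k hk) (hR1 k) ys hyspw F0 hF0
          (cN (R k)) (fun F' hF' => hle (R k) F' hF')
        rw [hyslen, hF0card] at this
        exact this
      -- build the contradiction cover
      choose Fk hFkcard hFkcov using fun k => hmem (R k)
      set Fstar : Finset G := (Finset.range (n + 1)).biUnion
        (fun k => (Fk k).image (fun f => x k * f) ∪ (Fk k).image (fun f => g⁻¹ * (x k * f)))
        with hFstar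
      have hFstarcov : Cov Fstar V univ := by
        intro a _
        obtain ⟨k, hk, hk2⟩ := hno a
        by_cases hmem1 : a ∈ (fun h => (x k)⁻¹ * h) ⁻¹' (R k)
        · -- a ∈ W k, i.e. (x k)⁻¹ * a ∈ R k
          obtain ⟨f, hf, hfv⟩ := hFkcov k ((x k)⁻¹ * a) hmem1
          refine ⟨x k * f, ?_, ?_⟩
          · rw [hFstar]
            apply Finset.mem_biUnion.mpr
            exact ⟨k, Finset.mem_range.mpr (Nat.lt_succ_of_le hk),
              Finset.mem_union_left _ (Finset.mem_image_of_mem _ hf)⟩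
          · have : (x k * f)⁻¹ * a = f⁻¹ * ((x k)⁻¹ * a) := by group
            rw [this]; exact hfv
        · -- g * a ∈ W k
          have hmem2 : (x k)⁻¹ * (g * a) ∈ R k := hk2 hmem1
          obtain ⟨f, hf, hfv⟩ := hFkcov k ((x k)⁻¹ * (g * a)) hmem2
          refine ⟨g⁻¹ * (x k * f), ?_, ?_⟩
          · rw [hFstar]
            apply Finset.mem_biUnion.mpr
            exact ⟨k, Finset.mem_range.mpr (Nat.lt_succ_of_le hk),
              Finset.mem_union_right _ (Finset.mem_image_of_mem _ hf)⟩
          · have : (g⁻¹ * (x k * f))⁻¹ * a = f⁻¹ * ((x k)⁻¹ * (g * a)) := by group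
            rw [this]; exact hfv
      have hchain : cN univ ≤ Fstar.card := hle univ Fstar hFstarcov
      have hcard : Fstar.card ≤ ∑ k ∈ Finset.range (n + 1), 2 * cN (R k) := by
        calc Fstar.card ≤ ∑ k ∈ Finset.range (n + 1),
            ((Fk k).image (fun f => x k * f) ∪ (Fk k).image (fun f => g⁻¹ * (x k * f))).card :=
              Finset.card_biUnion_le
          _ ≤ ∑ k ∈ Finset.range (n + 1), 2 * cN (R k) := by
              apply Finset.sum_le_sum
              intro k _
              calc ((Fk k).image (fun f => x k * f) ∪
                    (Fk k).image (fun f => g⁻¹ * (x k * f))).card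
                  ≤ ((Fk k).image (fun f => x k * f)).card +
                    ((Fk k).image (fun f => g⁻¹ * (x k * f))).card := Finset.card_union_le _ _
                _ ≤ (Fk k).card + (Fk k).card :=
                    Nat.add_le_add Finset.card_image_le Finset.card_image_le
                _ = 2 * cN (R k) := by rw [hFkcard k]; ring
      have hsum : ∑ k ∈ Finset.range (n + 1), 2 * cN (R k) < cN univ :=
        sum_bound n (cN univ) (fun k => cN (R k)) hC1 hbuf
      omega
    · -- not totally bounded case
      push_neg at hTB
      obtain ⟨V, hVo, hV1, hV⟩ := hTB
      apply skeleton x hx (fun k => (fun h => (x k)⁻¹ * h) ⁻¹' V)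
        (fun k => hVo.preimage (continuous_const.mul continuous_id))
        (fun k => by simp [hV1])
      intro n g
      have hnc := hV ((Finset.range (n + 1)).image x ∪
        (Finset.range (n + 1)).image (fun k => g⁻¹ * x k))
      rw [Cov] at hnc
      push_neg at hnc
      obtain ⟨a, -, ha⟩ := hnc
      refine ⟨a, ?_⟩
      intro k hk
      have hk' : k ∈ Finset.range (n + 1) := Finset.mem_range.mpr (Nat.lt_succ_of_le hk)
      constructor
      · intro hmem
        exact ha (x k) (Finset.mem_union_left _ (Finset.mem_image_of_mem _ hk')) hmem
      · intro hmem
        apply ha (g⁻¹ * x k) (Finset.mem_union_right _ (Finset.mem_image_of_mem _ hk'))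
        have : (g⁻¹ * x k)⁻¹ * a = (x k)⁻¹ * (g * a) := by group
        rw [this]; exact hmem
end

section
/- Let G be a topological group that is not left precompact, i.e., there is a neighborhood U of the identity such that F·U ≠ G for every finite subset F of G. Then there exist an open neighborhood V of the identity and an injective sequence (pₙ)ₙ∈ℕ of points of G such that for each p ∈ G the set p·V intersects at most one member of the family {pₙ·V : n ∈ ℕ}. -/
open Pointwise

/-- If a topological group is not left precompact, then there are an open
neighborhood `V` of the identity and an injective sequence `p : ℕ → G` such that
each translate `p·V` meets at most one member of the family `{pₙ·V : n ∈ ℕ}`. -/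
theorem exists_separated_sequence_of_not_leftPrecompact
    {G : Type*} [Group G] [TopologicalSpace G] [IsTopologicalGroup G]
    (hnp : ∃ U ∈ nhds (1 : G), ∀ F : Set G, F.Finite → F * U ≠ Set.univ) :
    ∃ V : Set G, IsOpen V ∧ (1 : G) ∈ V ∧ ∃ p : ℕ → G, Function.Injective p ∧
      ∀ x : G, ∀ m n : ℕ,
        (({x} * V) ∩ ({p m} * V)).Nonempty → (({x} * V) ∩ ({p n} * V)).Nonempty → m = n := by
  classical
  obtain ⟨U, hU, hF⟩ := hnp
  obtain ⟨W, hWo, hW1, hWU⟩ := exists_open_nhds_one_mul_subset hU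
  obtain ⟨V₀, hVo, hV01, hVW⟩ := exists_open_nhds_one_mul_subset (hWo.mem_nhds hW1)
  set V : Set G := V₀ ∩ V₀⁻¹ with hVdef
  have hVopen : IsOpen V := hVo.inter (hVo.preimage continuous_inv)
  have hV1 : (1 : G) ∈ V := ⟨hV01, by simpa using hV01⟩
  have hVsymm : ∀ {g : G}, g ∈ V → g⁻¹ ∈ V := by
    intro g hg
    exact ⟨hg.2, by simpa using hg.1⟩
  have hVsub : V ⊆ V₀ := Set.inter_subset_left
  -- the fourfold product
  have hU4 : ∀ a b c d : G, a ∈ V → b ∈ V → c ∈ V → d ∈ V → a * b * c * d ∈ U := by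
    intro a b c d ha hb hc hd
    have h1 : a * b ∈ W := hVW (Set.mul_mem_mul (hVsub ha) (hVsub hb))
    have h2 : c * d ∈ W := hVW (Set.mul_mem_mul (hVsub hc) (hVsub hd))
    have := hWU (Set.mul_mem_mul h1 h2)
    simpa [mul_assoc] using this
  set U4 : Set G := {g : G | ∃ a ∈ V, ∃ b ∈ V, ∃ c ∈ V, ∃ d ∈ V, g = a * b * c * d}
    with hU4def
  have hU4subU : U4 ⊆ U := by
    rintro g ⟨a, ha, b, hb, c, hc, d, hd, rfl⟩
    exact hU4 a b c d ha hb hc hd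
  have hU4symm : ∀ {g : G}, g ∈ U4 → g⁻¹ ∈ U4 := by
    rintro g ⟨a, ha, b, hb, c, hc, d, hd, rfl⟩
    exact ⟨d⁻¹, hVsymm hd, c⁻¹, hVsymm hc, b⁻¹, hVsymm hb, a⁻¹, hVsymm ha, by group⟩
  have h1U4 : (1 : G) ∈ U4 := ⟨1, hV1, 1, hV1, 1, hV1, 1, hV1, by group⟩
  -- key choice lemma
  have key : ∀ S : Finset G, ∃ g : G, ∀ s ∈ S, s⁻¹ * g ∉ U4 := by
    intro S
    have hne := hF (S : Set G) S.finite_toSet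
    have : ∃ g : G, g ∉ (S : Set G) * U := by
      by_contra h
      push_neg at h
      exact hne (Set.eq_univ_of_forall h)
    obtain ⟨g, hg⟩ := this
    refine ⟨g, fun s hs hmem => hg ?_⟩
    have : g = s * (s⁻¹ * g) := by group
    rw [this]
    exact Set.mul_mem_mul hs (hU4subU hmem)
  choose f hf using key
  set S : ℕ → Finset G := fun n => Nat.rec ∅ (fun _ T => insert (f T) T) n with hSdef
  set p : ℕ → G := fun n => f (S n) with hpdef
  have hSsucc : ∀ n, S (n + 1) = insert (p n) (S n) := fun n => rfl
  have hmono : ∀ m n : ℕ, m ≤ n → S m ⊆ S n := by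
    intro m n h
    induction n with
    | zero => simp [Nat.le_zero.mp h]
    | succ k ih =>
      rcases Nat.le_succ_iff.mp h with h' | h'
      · exact (ih h').trans (by rw [hSsucc]; exact Finset.subset_insert _ _)
      · simp [h']
  have hmem : ∀ m n : ℕ, m < n → p m ∈ S n := by
    intro m n h
    have : p m ∈ S (m + 1) := by rw [hSsucc]; exact Finset.mem_insert_self _ _
    exact hmono _ _ h this
  have hsep : ∀ m n : ℕ, m < n → (p m)⁻¹ * p n ∉ U4 := fun m n h =>
    hf (S n) (p m) (hmem m n h)
  have hsep' : ∀ m n : ℕ, m ≠ n → (p m)⁻¹ * p n ∉ U4 := by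
    intro m n h
    rcases lt_or_gt_of_ne h with h' | h'
    · exact hsep m n h'
    · intro hmem'
      have := hU4symm hmem'
      rw [show ((p m)⁻¹ * p n)⁻¹ = (p n)⁻¹ * p m by group] at this
      exact hsep n m h' this
  refine ⟨V, hVopen, hV1, p, ?_, ?_⟩
  · intro m n h
    by_contra hne
    exact hsep' m n hne (by rw [h]; simpa using h1U4)
  · rintro x m n ⟨y, hy1, hy2⟩ ⟨z, hz1, hz2⟩
    rw [Set.singleton_mul] at hy1 hy2 hz1 hz2
    obtain ⟨a, ha, hya⟩ := hy1
    obtain ⟨b, hb, hyb⟩ := hy2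
    obtain ⟨c, hc, hzc⟩ := hz1
    obtain ⟨d, hd, hzd⟩ := hz2
    by_contra hne
    apply hsep' m n hne
    refine ⟨b, hb, a⁻¹, hVsymm ha, c, hc, d⁻¹, hVsymm hd, ?_⟩
    simp only [Set.image_mul_left] at *
    have h1 : x * a = p m * b := by rw [hya, hyb]
    have h2 : x * c = p n * d := by rw [hzc, hzd]
    have : p m = x * a * b⁻¹ := by rw [h1]; group
    have h2' : p n = x * c * d⁻¹ := by rw [h2]; group
    rw [this, h2']
    group
end

section
/- Every pseudocompact topological group G is left precompact: for every neighborhood U of the identity there is a finite subset F of G with F·U = G. -/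
open Pointwise

open Classical in
private noncomputable def Efun (p : ℕ → Prop) : NNReal :=
  if h : ∃ n, p n then (1/2 : NNReal)^(Nat.find h) else 0

open Classical in
private lemma Efun_pos {p : ℕ → Prop} (h : ∃ n, p n) :
    Efun p = (1/2 : NNReal)^(Nat.find h) := dif_pos h

private lemma Efun_zero {p : ℕ → Prop} (h : ¬ ∃ n, p n) : Efun p = 0 := dif_neg h

open Classical in
private lemma Efun_le_iff {p : ℕ → Prop} (hp : ∀ m n : ℕ, m ≤ n → p m → p n) (n : ℕ) :
    (1/2 : NNReal)^n ≤ Efun p ↔ p n := by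
  have hr : ((1:NNReal)/2) ∈ Set.Ioo (0 : NNReal) 1 :=
    ⟨half_pos one_pos, NNReal.half_lt_self one_ne_zero⟩
  by_cases h : ∃ n, p n
  · rw [Efun_pos h, (pow_right_strictAnti₀ hr.1 hr.2).le_iff_ge, Nat.find_le_iff]
    exact ⟨fun ⟨m, hmn, hm⟩ => hp m n hmn hm, fun h' => ⟨n, le_rfl, h'⟩⟩
  · rw [Efun_zero h]
    push_neg at h
    simp [h n, (pow_pos hr.1 n).not_ge]

open Classical in
private lemma Efun_quad {p q r s : ℕ → Prop}
    (hmq : ∀ m n : ℕ, m ≤ n → q m → q n) (hmr : ∀ m n : ℕ, m ≤ n → r m → r n)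
    (hms : ∀ m n : ℕ, m ≤ n → s m → s n)
    (h : ∀ n : ℕ, ¬ q (n+1) → ¬ r (n+1) → ¬ s (n+1) → ¬ p n) :
    Efun p ≤ 2 * max (Efun q) (max (Efun r) (Efun s)) := by
  by_cases H : ∃ n, p n
  · rw [Efun_pos H]
    rw [← div_le_iff₀' zero_lt_two, ← mul_one_div ((1/2 : NNReal) ^ _), ← pow_succ]
    simp only [le_max_iff, Efun_le_iff hmq, Efun_le_iff hmr, Efun_le_iff hms]
    by_contra hcon
    push_neg at hcon
    exact h _ hcon.1 hcon.2.1 hcon.2.2 (Nat.find_spec H)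
  · rw [Efun_zero H]
    exact zero_le

section Group

variable {G : Type*} [Group G] [TopologicalSpace G] [IsTopologicalGroup G]

private lemma exists_sym_cube {W : Set G} (hWo : IsOpen W) (hW1 : (1:G) ∈ W) :
    ∃ V : Set G, IsOpen V ∧ (1:G) ∈ V ∧ V⁻¹ = V ∧ V * V * V ⊆ W ∧ V ⊆ W := by
  obtain ⟨A, hAo, hA1, hA⟩ := exists_open_nhds_one_mul_subset (hWo.mem_nhds hW1)
  obtain ⟨B, hBo, hB1, hB⟩ := exists_open_nhds_one_mul_subset (hAo.mem_nhds hA1)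
  have hBA : B ⊆ A := fun b hb => by simpa using hB (Set.mul_mem_mul hb hB1)
  have hAW : A ⊆ W := fun a ha => by simpa using hA (Set.mul_mem_mul ha hA1)
  refine ⟨B ∩ B⁻¹, hBo.inter hBo.inv, ⟨hB1, by simpa using hB1⟩, ?_, ?_, ?_⟩
  · rw [Set.inter_inv, inv_inv, Set.inter_comm]
  · intro z hz
    obtain ⟨u, hu, c, hc, rfl⟩ := hz
    obtain ⟨a, ha, b, hb, rfl⟩ := hu
    have h1 : a * b ∈ A := hB (Set.mul_mem_mul ha.1 hb.1)
    exact hA (Set.mul_mem_mul h1 (hBA hc.1))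
  · exact fun b hb => hAW (hBA hb.1)

private lemma exists_chain {W : Set G} (hWo : IsOpen W) (hW1 : (1:G) ∈ W) :
    ∃ V : ℕ → Set G, (∀ n, IsOpen (V n)) ∧ (∀ n, (1:G) ∈ V n) ∧ (∀ n, (V n)⁻¹ = V n) ∧
      (∀ n, V (n+1) * V (n+1) * V (n+1) ⊆ V n) ∧ (∀ n m, n ≤ m → V m ⊆ V n) ∧ V 0 ⊆ W := by
  have step : ∀ p : {V : Set G // IsOpen V ∧ (1:G) ∈ V},
      ∃ V' : Set G, (IsOpen V' ∧ (1:G) ∈ V') ∧ (V')⁻¹ = V' ∧ V' * V' * V' ⊆ p.1 ∧ V' ⊆ p.1 := by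
    rintro ⟨V, hVo, hV1⟩
    obtain ⟨V', h1, h2, h3, h4, h5⟩ := exists_sym_cube hVo hV1
    exact ⟨V', ⟨h1, h2⟩, h3, h4, h5⟩
  let next : {V : Set G // IsOpen V ∧ (1:G) ∈ V} → {V : Set G // IsOpen V ∧ (1:G) ∈ V} :=
    fun p => ⟨(step p).choose, (step p).choose_spec.1⟩
  let F : ℕ → {V : Set G // IsOpen V ∧ (1:G) ∈ V} := fun n => next^[n] ⟨W, hWo, hW1⟩
  have hsucc : ∀ n, F (n+1) = next (F n) := fun n => Function.iterate_succ_apply' next n _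
  have hspec : ∀ n, ((F (n+1)).1)⁻¹ = (F (n+1)).1 ∧
      (F (n+1)).1 * (F (n+1)).1 * (F (n+1)).1 ⊆ (F n).1 ∧ (F (n+1)).1 ⊆ (F n).1 := by
    intro n
    rw [hsucc n]
    exact (step (F n)).choose_spec.2
  have key : ∀ n k, (F (n+1+k)).1 ⊆ (F (n+1)).1 := by
    intro n k
    induction k with
    | zero => exact fun _ h => h
    | succ j ih => exact fun z hz => ih ((hspec (n+1+j)).2.2 hz)
  refine ⟨fun n => (F (n+1)).1, ?_, ?_, ?_, ?_, ?_, ?_⟩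
  · intro n; exact (F (n+1)).2.1
  · intro n; exact (F (n+1)).2.2
  · intro n; exact (hspec n).1
  · intro n; exact (hspec (n+1)).2.1
  · intro n m hnm
    show (F (m+1)).1 ⊆ (F (n+1)).1
    have h : m + 1 = n + 1 + (m - n) := by omega
    rw [h]
    exact key n (m - n)
  · exact (hspec 0).2.2

private lemma exists_bump {W : Set G} (hW : W ∈ nhds (1:G)) :
    ∃ φ : G → ℝ, Continuous φ ∧ φ 1 = 1 ∧ (∀ x, 0 ≤ φ x) ∧ (∀ x, φ x ≤ 1) ∧
      ∀ x, x ∉ W → φ x = 0 := by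
  classical
  obtain ⟨V, hVo, hV1, hVsym, hVcube, hVanti, hV0⟩ :=
    exists_chain (isOpen_interior (s := W)) (mem_interior_iff_mem_nhds.2 hW)
  set d : G → G → NNReal := fun x y => Efun (fun n => x⁻¹ * y ∉ V n) with hd
  have hmono : ∀ x y : G, ∀ m n : ℕ, m ≤ n → x⁻¹*y ∉ V m → x⁻¹*y ∉ V n :=
    fun x y m n hmn h hx => h (hVanti m n hmn hx)
  have hled : ∀ (x y : G) (n : ℕ), ((1:NNReal)/2)^n ≤ d x y ↔ x⁻¹*y ∉ V n :=
    fun x y n => Efun_le_iff (hmono x y) n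
  have hself : ∀ x : G, d x x = 0 := by
    intro x
    apply Efun_zero
    rintro ⟨n, hn⟩
    exact hn (by simpa using hV1 n)
  have hkey : ∀ (n : ℕ) (z : G), z ∈ V n ↔ z⁻¹ ∈ V n := by
    intro n z
    conv_lhs => rw [← hVsym n]
    exact Set.mem_inv
  have hcomm : ∀ x y : G, d x y = d y x := by
    intro x y
    apply congrArg Efun
    funext n
    rw [eq_iff_iff, not_iff_not, show y⁻¹*x = (x⁻¹*y)⁻¹ by group]
    exact hkey n _
  have hr : ((1:NNReal)/2) ∈ Set.Ioo (0 : NNReal) 1 :=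
    ⟨half_pos one_pos, NNReal.half_lt_self one_ne_zero⟩
  have hquad : ∀ x₁ x₂ x₃ x₄ : G, d x₁ x₄ ≤ 2 * max (d x₁ x₂) (max (d x₂ x₃) (d x₃ x₄)) := by
    intro x₁ x₂ x₃ x₄
    refine Efun_quad (hmono x₁ x₂) (hmono x₂ x₃) (hmono x₃ x₄) ?_
    intro n h1 h2 h3 h4
    rw [not_not] at h1 h2 h3
    apply h4
    have hm := Set.mul_mem_mul (Set.mul_mem_mul h1 h2) h3
    have heq : x₁⁻¹ * x₄ = (x₁⁻¹*x₂) * (x₂⁻¹*x₃) * (x₃⁻¹*x₄) := by group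
    rw [heq]
    exact hVcube n hm
  set dd : G → G → ℝ := fun a b =>
    @dist G (@PseudoMetricSpace.toDist G (PseudoMetricSpace.ofPreNNDist d hself hcomm)) a b
    with hddd
  have hdd_le : ∀ a b : G, dd a b ≤ (d a b : ℝ) :=
    fun a b => PseudoMetricSpace.dist_ofPreNNDist_le d hself hcomm a b
  have hle_dd : ∀ a b : G, (d a b : ℝ) ≤ 2 * dd a b :=
    fun a b => PseudoMetricSpace.le_two_mul_dist_ofPreNNDist d hself hcomm hquad a b
  have hdd_self : dd 1 1 = 0 :=
    @dist_self G (PseudoMetricSpace.ofPreNNDist d hself hcomm) 1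
  have hdd_nonneg : ∀ a b : G, 0 ≤ dd a b :=
    fun a b => @dist_nonneg G (PseudoMetricSpace.ofPreNNDist d hself hcomm) a b
  have htri : ∀ a b c : G, |dd a c - dd b c| ≤ dd a b :=
    fun a b c => @abs_dist_sub_le G (PseudoMetricSpace.ofPreNNDist d hself hcomm) a b c
  have hdd_comm : ∀ a b : G, dd a b = dd b a :=
    fun a b => @dist_comm G (PseudoMetricSpace.ofPreNNDist d hself hcomm) a b
  have hDcont : Continuous (fun y => dd 1 y) := by
    rw [continuous_iff_continuousAt]
    intro x₀
    rw [ContinuousAt, Metric.tendsto_nhds]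
    intro ε hε
    obtain ⟨n, hn⟩ : ∃ n : ℕ, ((1:ℝ)/2)^n < ε :=
      exists_pow_lt_of_lt_one hε (by norm_num)
    have hnb : x₀ • V n ∈ nhds x₀ :=
      ((hVo n).smul x₀).mem_nhds ⟨1, hV1 n, mul_one x₀⟩
    filter_upwards [hnb] with y hy
    rw [Real.dist_eq]
    show |dd 1 y - dd 1 x₀| < ε
    have hmem : x₀⁻¹ * y ∈ V n := by
      have := Set.mem_smul_set_iff_inv_smul_mem.1 hy
      simpa [smul_eq_mul] using this
    have h2 : d x₀ y < (1/2 : NNReal)^n := by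
      by_contra h
      push_neg at h
      exact (hled x₀ y n).1 h hmem
    have h2' : (d x₀ y : ℝ) < ((1:ℝ)/2)^n := by exact_mod_cast h2
    calc |dd 1 y - dd 1 x₀|
        = |dd y 1 - dd x₀ 1| := by rw [hdd_comm 1 y, hdd_comm 1 x₀]
      _ ≤ dd y x₀ := htri y x₀ 1
      _ = dd x₀ y := hdd_comm y x₀
      _ ≤ (d x₀ y : ℝ) := hdd_le x₀ y
      _ < ((1:ℝ)/2)^n := h2'
      _ < ε := hn
  refine ⟨fun y => max 0 (1 - 4 * dd 1 y), ?_, ?_, fun y => le_max_left _ _, ?_, ?_⟩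
  · exact continuous_const.max (continuous_const.sub (continuous_const.mul hDcont))
  · show max 0 (1 - 4 * dd 1 1) = 1
    rw [hdd_self]; norm_num
  · intro y
    show max 0 (1 - 4 * dd 1 y) ≤ 1
    have := hdd_nonneg 1 y
    apply max_le <;> nlinarith
  · intro y hy
    show max 0 (1 - 4 * dd 1 y) = 0
    have hy0 : y ∉ V 0 := fun h => hy (interior_subset (hV0 h))
    have h1 : ((1:NNReal)/2)^0 ≤ d 1 y := (hled 1 y 0).2 (by simpa using hy0)
    have h2 : (1:ℝ) ≤ (d 1 y : ℝ) := by
      rw [pow_zero] at h1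
      exact_mod_cast h1
    have h3 := hle_dd 1 y
    apply max_eq_left
    nlinarith

end Group

/-- Every pseudocompact topological group (every continuous real-valued function
is bounded) is left precompact: for every neighborhood `U` of the identity there
is a finite set `F` with `F·U = G`. -/
theorem leftPrecompact_of_pseudocompact
    {G : Type*} [Group G] [TopologicalSpace G] [IsTopologicalGroup G]
    (hpc : ∀ f : G → ℝ, Continuous f → ∃ M : ℝ, ∀ x : G, |f x| ≤ M) :
    ∀ U ∈ nhds (1 : G), ∃ F : Set G, F.Finite ∧ F * U = Set.univ := by
  intro U hU
  by_contra hcon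
  push_neg at hcon
  classical
  have hpick : ∀ s : Finset G, ∃ y : G, y ∉ (s : Set G) * U := by
    intro s
    by_contra h'
    push_neg at h'
    exact hcon (↑s) s.finite_toSet (Set.eq_univ_of_forall h')
  let T : ℕ → Finset G := fun n => Nat.rec ∅ (fun _ s => insert (hpick s).choose s) n
  let Ts : ℕ → Set G := fun n => {g : G | g ∈ T n}
  let x : ℕ → G := fun n => (hpick (T n)).choose
  have hxT : ∀ n, x n ∉ Ts n * U := by
    intro n
    have h := (hpick (T n)).choose_spec
    intro hmem
    apply h
    obtain ⟨a, ha, b, hb, heq⟩ := hmem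
    exact ⟨a, ha, b, hb, heq⟩
  have hTsucc : ∀ n, T (n+1) = insert (x n) (T n) := by
    intro n
    rfl
  have hmem : ∀ m n, m < n → x m ∈ T n := by
    intro m n hmn
    induction n with
    | zero => omega
    | succ k ih =>
      rw [hTsucc k]
      rcases Nat.lt_succ_iff_lt_or_eq.1 hmn with h | h
      · exact Finset.mem_insert_of_mem (ih h)
      · subst h; exact Finset.mem_insert_self _ _
  have hsep : ∀ m n, m < n → ∀ u ∈ U, x n ≠ x m * u := by
    intro m n hmn u hu heq
    apply hxT n
    rw [heq]
    have h1 : x m ∈ Ts n := hmem m n hmn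
    exact Set.mul_mem_mul h1 hu
  -- symmetric small set S with S*S*S*S ⊆ U
  obtain ⟨A, hAo, hA1, hA⟩ := exists_open_nhds_one_mul_subset hU
  obtain ⟨B, hBo, hB1, hB⟩ := exists_open_nhds_one_mul_subset (hAo.mem_nhds hA1)
  set S := B ∩ B⁻¹ with hSdef
  have hSo : IsOpen S := hBo.inter hBo.inv
  have hS1 : (1:G) ∈ S := ⟨hB1, by simpa using hB1⟩
  have hSsym : ∀ g, g ∈ S → g⁻¹ ∈ S := by
    rintro g ⟨h1, h2⟩
    exact ⟨Set.mem_inv.1 h2, Set.mem_inv.2 (by simpa using h1)⟩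
  have hS4 : ∀ a b c e : G, a ∈ S → b ∈ S → c ∈ S → e ∈ S → a*b*c*e ∈ U := by
    intro a b c e ha hb hc he'
    have h1 : a * b ∈ A := hB (Set.mul_mem_mul ha.1 hb.1)
    have h2 : c * e ∈ A := hB (Set.mul_mem_mul hc.1 he'.1)
    have := hA (Set.mul_mem_mul h1 h2)
    rwa [show a*b*(c*e) = a*b*c*e by group] at this
  have hSU : S ⊆ U := fun s hs => by simpa using hS4 s 1 1 1 hs hS1 hS1 hS1
  obtain ⟨φ, hφc, hφ1, hφ0, hφle1, hφsupp⟩ := exists_bump (hSo.mem_nhds hS1)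
  let fn : ℕ → G → ℝ := fun n y => (n : ℝ) * φ ((x n)⁻¹ * y)
  have hfn_cont : ∀ n, Continuous (fn n) :=
    fun n => continuous_const.mul (hφc.comp (continuous_const.mul continuous_id))
  have hsupp : ∀ n, Function.support (fn n) ⊆ x n • S := by
    intro n y hy
    have hφne : φ ((x n)⁻¹ * y) ≠ 0 := fun h => hy (by simp [fn, h])
    have hmemS : (x n)⁻¹ * y ∈ S := by
      by_contra h
      exact hφne (hφsupp _ h)
    exact Set.mem_smul_set_iff_inv_smul_mem.2 (by simpa [smul_eq_mul] using hmemS)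
  have hdisj : ∀ m n, m < n → ∀ g : G,
      ¬((x m • S ∩ g • S).Nonempty ∧ (x n • S ∩ g • S).Nonempty) := by
    rintro m n hmn g ⟨⟨a, ham, hag⟩, ⟨b, hbn, hbg⟩⟩
    obtain ⟨s2, hs2, rfl⟩ := ham
    obtain ⟨s1, hs1, heq1⟩ := hag
    obtain ⟨s4, hs4, rfl⟩ := hbn
    obtain ⟨s3, hs3, heq3⟩ := hbg
    simp only [smul_eq_mul] at heq1 heq3
    have h1 : g = x m * s2 * s1⁻¹ := eq_mul_inv_iff_mul_eq.2 heq1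
    have h2 : x n * s4 = g * s3 := heq3.symm
    have hxn : x n = x m * (s2 * s1⁻¹ * s3 * s4⁻¹) := by
      have : x n = g * s3 * s4⁻¹ := eq_mul_inv_iff_mul_eq.2 h2
      rw [this, h1]; group
    exact hsep m n hmn _ (hS4 _ _ _ _ hs2 (hSsym _ hs1) hs3 (hSsym _ hs4)) hxn
  have hlf : LocallyFinite (fun n => Function.support (fn n)) := by
    intro g
    refine ⟨g • S, (hSo.smul g).mem_nhds ⟨1, hS1, mul_one g⟩, ?_⟩
    apply Set.Subsingleton.finite
    intro m hm n hn
    by_contra hne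
    have hm' : (x m • S ∩ g • S).Nonempty :=
      Set.Nonempty.mono (Set.inter_subset_inter (hsupp m) (Set.Subset.refl _)) hm
    have hn' : (x n • S ∩ g • S).Nonempty :=
      Set.Nonempty.mono (Set.inter_subset_inter (hsupp n) (Set.Subset.refl _)) hn
    rcases lt_or_gt_of_ne hne with h | h
    · exact hdisj m n h g ⟨hm', hn'⟩
    · exact hdisj n m h g ⟨hn', hm'⟩
  have hcont : Continuous (fun y => ∑ᶠ n, fn n y) := continuous_finsum hfn_cont hlf
  have hval : ∀ n : ℕ, (∑ᶠ m, fn m (x n)) = (n : ℝ) := by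
    intro n
    have hzero : ∀ m, m ≠ n → fn m (x n) = 0 := by
      intro m hmn
      have hns : x n ∉ x m • S := by
        rintro ⟨s, hs, hxs⟩
        simp only [smul_eq_mul] at hxs
        rcases lt_or_gt_of_ne hmn with h | h
        · exact hsep m n h s (hSU hs) hxs.symm
        · exact hsep n m h s⁻¹ (hSU (hSsym s hs)) (eq_mul_inv_iff_mul_eq.2 hxs)
      have hnotS : (x m)⁻¹ * x n ∉ S := by
        intro hmemS
        exact hns (Set.mem_smul_set_iff_inv_smul_mem.2 (by simpa [smul_eq_mul] using hmemS))
      simp [fn, hφsupp _ hnotS]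
    rw [finsum_eq_single _ n hzero]
    simp [fn, hφ1]
  obtain ⟨M, hM⟩ := hpc _ hcont
  have h1 := hM (x (⌊M⌋₊ + 1))
  rw [hval (⌊M⌋₊ + 1)] at h1
  rw [abs_of_nonneg (by positivity)] at h1
  have h2 : M < (⌊M⌋₊ : ℝ) + 1 := Nat.lt_floor_add_one M
  push_cast at h1
  linarith
end

section
/- Let G be a Hausdorff topological group and H an open subgroup of G. If H (with its subspace topology) has a suitable set, then G has a suitable set; if H has a closed suitable set, then G has a closed suitable set. -/
section Aux

variable {G : Type*} [Group G] [TopologicalSpace G] [IsTopologicalGroup G] [T2Space G]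

lemma suitable_aux (H : Subgroup G) (hHopen : IsOpen (H : Set G))
    (S : Set H) (hS : IsSuitable S) :
    ∃ S' : Set G, IsSuitable S' ∧ (IsClosed S → IsClosed S') := by
  classical
  obtain ⟨hSdisc, hSclosed, hSdense⟩ := hS
  have hHclosed : IsClosed (H : Set G) := H.isClosed_of_isOpen hHopen
  -- the section of the quotient map, sending the trivial coset to 1
  set π : G → G ⧸ H := QuotientGroup.mk with hπ
  set r : G ⧸ H → G := fun q => if q = π (1 : G) then 1 else q.out with hr
  have hrπ : ∀ q, π (r q) = q := by
    intro q
    simp only [hr]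
    split_ifs with h
    · rw [h]
    · exact QuotientGroup.out_eq' q
  have hr1 : r (π (1 : G)) = 1 := by simp [hr]
  set T : Set G := Set.range r with hT
  have hTmem : ∀ g : G, g ∈ T ↔ r (π g) = g := by
    intro g
    constructor
    · rintro ⟨q, rfl⟩; rw [hrπ]
    · intro h; exact ⟨π g, h⟩
  have hπ1 : ∀ g : G, π g = π (1 : G) ↔ g ∈ H := by
    intro g
    rw [hπ]
    show (g : G ⧸ H) = ((1 : G) : G ⧸ H) ↔ _
    rw [QuotientGroup.eq]
    simp
  have hTH : ∀ g ∈ T, g ∈ H → g = 1 := by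
    intro g hg hgH
    rw [hTmem] at hg
    rw [← hg]
    have : π g = π (1 : G) := (hπ1 g).2 hgH
    rw [this, hr1]
  -- cosets are open
  have hcoset_open : ∀ g : G, IsOpen {x : G | π x = π g} := by
    intro g
    have : {x : G | π x = π g} = (fun x => g⁻¹ * x) ⁻¹' (H : Set G) := by
      ext x
      simp only [Set.mem_setOf_eq, Set.mem_preimage, SetLike.mem_coe]
      rw [hπ]
      show (x : G ⧸ H) = (g : G ⧸ H) ↔ _
      rw [eq_comm, QuotientGroup.eq]
    rw [this]
    exact hHopen.preimage (continuous_mul_left g⁻¹)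
  -- T is closed
  have hTclosed : IsClosed T := by
    rw [← isOpen_compl_iff]
    rw [isOpen_iff_forall_mem_open]
    intro g hg
    refine ⟨{x : G | π x = π g} \ {r (π g)}, ?_, ?_, ?_⟩
    · intro x hx
      simp only [Set.mem_diff, Set.mem_setOf_eq, Set.mem_singleton_iff] at hx
      intro hxT
      rw [hTmem] at hxT
      exact hx.2 (by rw [← hxT, hx.1])
    · exact (hcoset_open g).sdiff isClosed_singleton
    · refine ⟨rfl, ?_⟩
      simp only [Set.mem_singleton_iff]
      intro h
      exact hg ((hTmem g).2 h.symm)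
  -- T \ {1} is closed
  have hT1closed : IsClosed (T \ {1}) := by
    rw [← isOpen_compl_iff]
    have : (T \ {1})ᶜ = Tᶜ ∪ (H : Set G) := by
      ext x
      simp only [Set.mem_compl_iff, Set.mem_diff, Set.mem_singleton_iff, Set.mem_union,
        SetLike.mem_coe]
      constructor
      · intro h
        by_cases hx : x ∈ T
        · right
          have := not_and.mp h hx
          push_neg at this
          rw [this]; exact H.one_mem
        · left; exact hx
      · rintro (h | h)
        · exact fun h' => h h'.1
        · intro h'
          exact h'.2 (hTH x h'.1 h)
    rw [this]
    exact hTclosed.isOpen_compl.union hHopen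
  -- the image of S in G
  set S₀ : Set G := (Subtype.val : H → G) '' S with hS₀
  have hS₀H : S₀ ⊆ (H : Set G) := by
    rintro _ ⟨s, _, rfl⟩; exact s.2
  set S' : Set G := S₀ ∪ (T \ {1}) with hS'
  have hvalCE := hHclosed.isClosedEmbedding_subtypeVal
  -- S₀ ∪ {1} is closed in G
  have hS₀1closed : IsClosed (S₀ ∪ {1}) := by
    have heq : S₀ ∪ {1} = (Subtype.val : H → G) '' (S ∪ {1}) := by
      rw [Set.image_union, Set.image_singleton, hS₀]
      rfl
    rw [heq]
    exact hvalCE.isClosedMap _ hSclosed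
  -- isolated point criterion for S'
  have hisol : ∀ a ∈ S', ∃ U : Set G, IsOpen U ∧ U ∩ S' = {a} := by
    intro a ha
    rcases ha with ⟨s, hsS, rfl⟩ | haT
    · -- a comes from S
      have h1 : IsOpen ({⟨s, hsS⟩} : Set S) := isOpen_discrete _
      rw [isOpen_induced_iff] at h1
      obtain ⟨V, hVopen, hV⟩ := h1
      rw [isOpen_induced_iff] at hVopen
      obtain ⟨W, hWopen, hW⟩ := hVopen
      refine ⟨W ∩ (H : Set G), hWopen.inter hHopen, ?_⟩
      ext x
      simp only [Set.mem_inter_iff, Set.mem_singleton_iff]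
      constructor
      · rintro ⟨⟨hxW, hxH⟩, hx⟩
        rcases hx with ⟨y, hyS, rfl⟩ | hxT
        · -- x in S₀
          have hyV : y ∈ V := by rw [← hW]; exact hxW
          have : (⟨y, hyS⟩ : S) ∈ (Subtype.val ⁻¹' V : Set S) := hyV
          rw [hV] at this
          have := congrArg (Subtype.val ∘ Subtype.val) this
          exact this
        · exact absurd (hTH x hxT.1 hxH) hxT.2
      · rintro rfl
        have hsV : s ∈ V := by
          have : (⟨s, hsS⟩ : S) ∈ ({⟨s, hsS⟩} : Set S) := rfl
          rw [← hV] at this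
          exact this
        refine ⟨⟨?_, s.2⟩, Or.inl ⟨s, hsS, rfl⟩⟩
        rw [← hW] at hsV
        exact hsV
    · -- a ∈ T \ {1}
      obtain ⟨haT', ha1⟩ := haT
      have haH : a ∉ (H : Set G) := fun h => ha1 (hTH a haT' h)
      refine ⟨{x : G | π x = π a}, hcoset_open a, ?_⟩
      ext x
      simp only [Set.mem_inter_iff, Set.mem_setOf_eq, Set.mem_singleton_iff]
      constructor
      · rintro ⟨hxπ, hx⟩
        rcases hx with ⟨y, hyS, rfl⟩ | hxT
        · exfalso
          apply haH
          have hyH : (y : G) ∈ H := y.2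
          have : π (y : G) = π (1 : G) := (hπ1 _).2 hyH
          rw [this] at hxπ
          have : π a = π (1 : G) := hxπ.symm
          exact (hπ1 a).1 this
        · rw [← (hTmem x).1 hxT.1, hxπ, (hTmem a).1 haT']
      · rintro rfl
        exact ⟨rfl, Or.inr ⟨haT', ha1⟩⟩
  refine ⟨S', ⟨?_, ?_, ?_⟩, ?_⟩
  · -- discreteness
    rw [discreteTopology_iff_isOpen_singleton]
    rintro ⟨a, ha⟩
    obtain ⟨U, hUopen, hU⟩ := hisol a ha
    rw [isOpen_induced_iff]
    refine ⟨U, hUopen, ?_⟩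
    ext ⟨x, hx⟩
    simp only [Set.mem_preimage, Set.mem_singleton_iff, Subtype.mk_eq_mk]
    constructor
    · intro hxU
      have : x ∈ U ∩ S' := ⟨hxU, hx⟩
      rw [hU] at this
      exact this
    · intro h
      have : x ∈ U ∩ S' := by rw [hU]; exact h
      exact this.1
  · -- S' ∪ {1} is closed
    have : S' ∪ {1} = (S₀ ∪ {1}) ∪ (T \ {1}) := by
      rw [hS']
      ext x
      simp only [Set.mem_union, Set.mem_singleton_iff, Set.mem_diff]
      tauto
    rw [this]
    exact hS₀1closed.union hT1closed
  · -- density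
    have hHsub : (H : Set G) ⊆ closure ((Subgroup.closure S') : Set G) := by
      intro h hh
      have h1 : (⟨h, hh⟩ : H) ∈ closure ((Subgroup.closure S : Subgroup H) : Set H) :=
        hSdense _
      rw [closure_subtype] at h1
      have h2 : (Subtype.val : H → G) '' ((Subgroup.closure S : Subgroup H) : Set H)
          ⊆ ((Subgroup.closure S' : Subgroup G) : Set G) := by
        have : Subgroup.map H.subtype (Subgroup.closure S) = Subgroup.closure S₀ := by
          rw [MonoidHom.map_closure]; rfl
        intro x hx
        have hx' : x ∈ (Subgroup.map H.subtype (Subgroup.closure S) : Set G) := by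
          rcases hx with ⟨y, hy, rfl⟩
          exact ⟨y, hy, rfl⟩
        rw [this] at hx'
        exact Subgroup.closure_mono Set.subset_union_left hx'
      exact closure_mono h2 h1
    intro g
    rw [mem_closure_iff_nhds]
    -- g = r (π g) * ((r (π g))⁻¹ * g), with the second factor in H
    have hKey : g ∈ (Subgroup.closure S').topologicalClosure := by
      have hrg : r (π g) ∈ (Subgroup.closure S').topologicalClosure := by
        by_cases h1 : r (π g) = 1
        · rw [h1]; exact one_mem _
        · apply Subgroup.le_topologicalClosure
          apply Subgroup.subset_closure
          exact Or.inr ⟨⟨π g, rfl⟩, h1⟩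
      have hhH : (r (π g))⁻¹ * g ∈ H := by
        have : π (r (π g)) = π g := hrπ _
        have h2 : ((r (π g) : G) : G ⧸ H) = (g : G ⧸ H) := this
        rw [QuotientGroup.eq] at h2
        exact h2
      have hh2 : (r (π g))⁻¹ * g ∈ (Subgroup.closure S').topologicalClosure := by
        show _ ∈ closure ((Subgroup.closure S' : Subgroup G) : Set G)
        exact hHsub hhH
      have := mul_mem hrg hh2
      rwa [mul_inv_cancel_left] at this
    have hKey' : g ∈ closure ((Subgroup.closure S' : Subgroup G) : Set G) := hKey
    rw [mem_closure_iff_nhds] at hKey'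
    exact hKey'
  · -- closedness in the closed case
    intro hSclosed'
    have h1 : IsClosed S₀ := hvalCE.isClosedMap _ hSclosed'
    exact h1.union hT1closed

end Aux

/-- If an open subgroup `H` of a Hausdorff topological group `G` has a
(closed) suitable set, then so does `G`. -/
theorem suitable_set_of_open_subgroup
    {G : Type*} [Group G] [TopologicalSpace G] [IsTopologicalGroup G] [T2Space G]
    (H : Subgroup G) (hHopen : IsOpen (H : Set G)) :
    ((∃ S : Set H, IsSuitable S) → ∃ S : Set G, IsSuitable S) ∧
    ((∃ S : Set H, IsSuitable S ∧ IsClosed S) →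
      ∃ S : Set G, IsSuitable S ∧ IsClosed S) := by
  constructor
  · rintro ⟨S, hS⟩
    obtain ⟨S', hS', _⟩ := suitable_aux H hHopen S hS
    exact ⟨S', hS'⟩
  · rintro ⟨S, hS, hScl⟩
    obtain ⟨S', hS', hcl⟩ := suitable_aux H hHopen S hS
    exact ⟨S', hS', hcl hScl⟩
end

section
/- Let G be a Hausdorff topological group that is left precompact but not pseudocompact, and let P be a countable dense subgroup of G. Then there exists a subset L of P such that L is closed in G, L is discrete in its subspace topology, and the subgroup of G generated by L equals P. In particular, L is a closed suitable set for G. -/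
open Pointwise



section Aux
variable {G : Type*} [Group G] [TopologicalSpace G] [IsTopologicalGroup G] [T2Space G]


lemma exists_finset_closure {S : Set G} {x : G} (hx : x ∈ Subgroup.closure S) :
    ∃ T : Finset G, ↑T ⊆ S ∧ x ∈ Subgroup.closure (↑T : Set G) := by
  classical
  induction hx using Subgroup.closure_induction with
  | mem y hy =>
      exact ⟨{y}, by simpa using hy, Subgroup.subset_closure (by simp)⟩
  | one => exact ⟨∅, by simp, Subgroup.one_mem _⟩
  | mul y z hy hz ihy ihz =>
      obtain ⟨T1, hT1, hym⟩ := ihy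
      obtain ⟨T2, hT2, hzm⟩ := ihz
      refine ⟨T1 ∪ T2, ?_, ?_⟩
      · rw [Finset.coe_union]; exact Set.union_subset hT1 hT2
      · exact Subgroup.mul_mem _
          (Subgroup.closure_mono (by rw [Finset.coe_union]; exact Set.subset_union_left) hym)
          (Subgroup.closure_mono (by rw [Finset.coe_union]; exact Set.subset_union_right) hzm)
  | inv y hy ihy =>
      obtain ⟨T, hT, hym⟩ := ihy
      exact ⟨T, hT, Subgroup.inv_mem _ hym⟩

/-- The set of "deep slab" elements of `P`: elements whose `f`-value lies in a slab
`(k, k+2)` with `k > n`. -/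
def slabSet (f : G → ℝ) (P : Subgroup G) (n : ℕ) : Set G :=
  {x | x ∈ P ∧ ∃ k : ℕ, n < k ∧ (k : ℝ) < f x ∧ f x < (k : ℝ) + 2}

/-- The subgroup generated by the deep slab elements. -/
def deepSubgroup (f : G → ℝ) (P : Subgroup G) (n : ℕ) : Subgroup G :=
  Subgroup.closure (slabSet f P n)

lemma slabSet_subset (f : G → ℝ) (P : Subgroup G) (n : ℕ) :
    slabSet f P n ⊆ (P : Set G) := fun _ hx => hx.1

lemma deepSubgroup_le (f : G → ℝ) (P : Subgroup G) (n : ℕ) :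
    deepSubgroup f P n ≤ P :=
  (Subgroup.closure_le _).2 (slabSet_subset f P n)


lemma subset_deepSubgroup {f : G → ℝ} {P : Subgroup G} {n : ℕ} :
    slabSet f P n ⊆ (deepSubgroup f P n : Set G) := Subgroup.subset_closure

lemma lt_of_mem_slabSet {f : G → ℝ} {P : Subgroup G} {n : ℕ} {x : G}
    (hx : x ∈ slabSet f P n) : (n : ℝ) < f x := by
  obtain ⟨-, k, hk, hk1, -⟩ := hx
  have : (n : ℝ) < (k : ℝ) := by exact_mod_cast hk
  linarith

lemma mem_slabSet {f : G → ℝ} {P : Subgroup G} {n : ℕ} {x : G}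
    (hxP : x ∈ P) (hfx : (n : ℝ) + 2 ≤ f x) : x ∈ slabSet f P n := by
  have h0 : (0:ℝ) ≤ f x := le_trans (by positivity) hfx
  have hfl : ((n + 2 : ℕ) : ℝ) ≤ f x := by push_cast; linarith
  have h2 : n + 2 ≤ ⌊f x⌋₊ := Nat.le_floor hfl
  refine ⟨hxP, ⌊f x⌋₊ - 1, ?_, ?_, ?_⟩
  · omega
  · have h1 : 1 ≤ ⌊f x⌋₊ := by omega
    have : ((⌊f x⌋₊ - 1 : ℕ) : ℝ) = (⌊f x⌋₊ : ℝ) - 1 := by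
      push_cast [Nat.cast_sub h1]; ring
    rw [this]
    have := Nat.floor_le h0
    linarith
  · have h1 : 1 ≤ ⌊f x⌋₊ := by omega
    have hc : ((⌊f x⌋₊ - 1 : ℕ) : ℝ) = (⌊f x⌋₊ : ℝ) - 1 := by
      push_cast [Nat.cast_sub h1]; ring
    rw [hc]
    have := Nat.lt_floor_add_one (f x)
    linarith

end Aux

section Aux2
variable {G : Type*} [Group G] [TopologicalSpace G] [IsTopologicalGroup G] [T2Space G]
variable {f : G → ℝ} {P : Subgroup G}

/-- There is an open neighborhood `V` of `1` such that `V ∩ P ⊆ deepSubgroup f P n`. -/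
lemma exists_open_nhd_subset_deep (hf : Continuous f)
    (hu : ∀ M : ℝ, ∃ x : G, M < f x) (hPd : Dense (P : Set G)) (n : ℕ) :
    ∃ V : Set G, IsOpen V ∧ (1 : G) ∈ V ∧ ∀ y ∈ V, y ∈ P → y ∈ deepSubgroup f P n := by
  set O : Set G := f ⁻¹' Set.Ioi ((n : ℝ) + 2) with hO
  have hOopen : IsOpen O := (isOpen_Ioi).preimage hf
  have hOne : O.Nonempty := by
    obtain ⟨x, hx⟩ := hu ((n : ℝ) + 2)
    exact ⟨x, hx⟩
  obtain ⟨u, huP, huO⟩ := hPd.exists_mem_open hOopen hOne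
  refine ⟨(fun y => u * y) ⁻¹' O, hOopen.preimage (continuous_const.mul continuous_id), ?_, ?_⟩
  · simpa using huO
  · intro y hyV hyP
    have huP' : u ∈ P := huP
    have h1 : u * y ∈ slabSet f P n :=
      mem_slabSet (P.mul_mem huP' hyP) (le_of_lt hyV)
    have h2 : u ∈ slabSet f P n := mem_slabSet huP' (le_of_lt huO)
    have : y = u⁻¹ * (u * y) := by group
    rw [this]
    exact Subgroup.mul_mem _ (Subgroup.inv_mem _ (Subgroup.subset_closure h2))
      (Subgroup.subset_closure h1)

/-- Finite cover of `P` by left translates of the deep subgroup. -/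
lemma exists_finset_cover (hf : Continuous f)
    (hu : ∀ M : ℝ, ∃ x : G, M < f x) (hPd : Dense (P : Set G))
    (hpre : ∀ U ∈ nhds (1 : G), ∃ F : Set G, F.Finite ∧ F * U = Set.univ) (n : ℕ) :
    ∃ R : Finset G, (↑R : Set G) ⊆ (P : Set G) ∧
      ∀ p ∈ P, ∃ τ ∈ R, τ⁻¹ * p ∈ deepSubgroup f P n := by
  classical
  obtain ⟨V, hVopen, hV1, hVsub⟩ := exists_open_nhd_subset_deep hf hu hPd n
  -- get W open ∋ 1 with a⁻¹ * b ∈ V for a b ∈ W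
  have hcont : Continuous fun p : G × G => p.1⁻¹ * p.2 :=
    (continuous_fst.inv).mul continuous_snd
  have hpre' : IsOpen ((fun p : G × G => p.1⁻¹ * p.2) ⁻¹' V) := hVopen.preimage hcont
  have hmem : ((1 : G), (1 : G)) ∈ ((fun p : G × G => p.1⁻¹ * p.2) ⁻¹' V) := by
    simpa using hV1
  obtain ⟨W1, W2, hW1o, hW2o, h1W1, h1W2, hWsub⟩ := isOpen_prod_iff.mp hpre' 1 1 hmem
  set W : Set G := W1 ∩ W2 with hW
  have hWo : IsOpen W := hW1o.inter hW2o
  have h1W : (1 : G) ∈ W := ⟨h1W1, h1W2⟩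
  have hWV : ∀ a ∈ W, ∀ b ∈ W, a⁻¹ * b ∈ V := by
    intro a ha b hb
    exact hWsub (Set.mk_mem_prod ha.1 hb.2)
  obtain ⟨F, hFfin, hFW⟩ := hpre W (hWo.mem_nhds h1W)
  -- choice of representatives in P
  set g : G → G := fun c =>
    if h : ∃ x : G, x ∈ P ∧ ∃ w ∈ W, c * w = x then h.choose else 1 with hg
  refine ⟨hFfin.toFinset.image g, ?_, ?_⟩
  · intro τ hτ
    simp only [Finset.coe_image, Set.mem_image, Set.Finite.coe_toFinset] at hτ
    obtain ⟨c, -, rfl⟩ := hτ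
    by_cases h : ∃ x : G, x ∈ P ∧ ∃ w ∈ W, c * w = x
    · simp only [hg, dif_pos h]
      exact h.choose_spec.1
    · simp only [hg, dif_neg h]
      exact P.one_mem
  · intro p hp
    have : p ∈ F * W := by rw [hFW]; trivial
    obtain ⟨c, hcF, w, hwW, hcw⟩ := Set.mem_mul.mp this
    have hex : ∃ x : G, x ∈ P ∧ ∃ w ∈ W, c * w = x := ⟨p, hp, w, hwW, hcw⟩
    refine ⟨g c, ?_, ?_⟩
    · exact Finset.mem_image_of_mem g (hFfin.mem_toFinset.mpr hcF)
    · have hspec := hex.choose_spec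
      simp only [hg, dif_pos hex]
      obtain ⟨hxP, w', hw'W, hcw'⟩ := hspec
      have hτp : (hex.choose)⁻¹ * p = w'⁻¹ * w := by
        rw [← hcw', ← hcw]; group
      have hVmem : (hex.choose)⁻¹ * p ∈ V := by
        rw [hτp]; exact hWV w' hw'W w hwW
      have hPmem : (hex.choose)⁻¹ * p ∈ P := P.mul_mem (P.inv_mem hxP) hp
      exact hVsub _ hVmem hPmem

end Aux2

section Aux3
variable {G : Type*} [Group G] [TopologicalSpace G] [IsTopologicalGroup G] [T2Space G]
variable {f : G → ℝ} {P : Subgroup G}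

lemma step_lemma (hf : Continuous f)
    (hu : ∀ M : ℝ, ∃ x : G, M < f x) (hPd : Dense (P : Set G))
    (hpre : ∀ U ∈ nhds (1 : G), ∃ F : Set G, F.Finite ∧ F * U = Set.univ)
    (m : ℕ) (L : Finset G) (hLP : (↑L : Set G) ⊆ (P : Set G))
    (hcov : ∀ p ∈ P, ∃ ρ, ρ ∈ Subgroup.closure (↑L : Set G) ∧ ρ⁻¹ * p ∈ deepSubgroup f P m)
    (target : G) (htarget : target ∈ P) :
    ∃ L' : Finset G, L ⊆ L' ∧ (↑L' : Set G) ⊆ (P : Set G) ∧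
      (∀ ℓ ∈ L', ℓ ∈ L ∨ (m : ℝ) < f ℓ) ∧
      (∀ p ∈ P, ∃ ρ, ρ ∈ Subgroup.closure (↑L' : Set G) ∧
        ρ⁻¹ * p ∈ deepSubgroup f P (m + 1)) ∧
      target ∈ Subgroup.closure (↑L' : Set G) := by
  classical
  obtain ⟨R, hRP, hRcov⟩ := exists_finset_cover hf hu hPd hpre (m + 1)
  -- the σ selector
  set σf : G → G := fun τ =>
    if h : ∃ x : G, x ∈ deepSubgroup f P m ∧ τ⁻¹ * x ∈ deepSubgroup f P (m + 1)
    then h.choose else 1 with hσf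
  have hσmem : ∀ τ, σf τ ∈ deepSubgroup f P m := by
    intro τ
    by_cases h : ∃ x : G, x ∈ deepSubgroup f P m ∧ τ⁻¹ * x ∈ deepSubgroup f P (m + 1)
    · simp only [hσf, dif_pos h]; exact h.choose_spec.1
    · simp only [hσf, dif_neg h]; exact Subgroup.one_mem _
  -- letters of the σ's
  have hσT : ∀ τ : G, ∃ T : Finset G, ↑T ⊆ slabSet f P m ∧
      σf τ ∈ Subgroup.closure (↑T : Set G) := fun τ => exists_finset_closure (hσmem τ)
  choose Tfun hT1 hT2 using hσT
  -- handle the target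
  obtain ⟨ρ₀, hρ₀, hy₀⟩ := hcov target htarget
  obtain ⟨T₀, hT₀1, hT₀2⟩ := exists_finset_closure hy₀
  -- the new finite set
  set L' : Finset G := L ∪ T₀ ∪ R.biUnion Tfun with hL'
  have hLsub : L ⊆ L' := by
    intro x hx; simp only [hL', Finset.mem_union]; tauto
  have hsubL : (↑L : Set G) ⊆ (↑L' : Set G) := Finset.coe_subset.mpr hLsub
  have hsubT₀ : (↑T₀ : Set G) ⊆ (↑L' : Set G) := by
    refine Finset.coe_subset.mpr ?_
    intro x hx; simp only [hL', Finset.mem_union]; tauto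
  have hsubT : ∀ τ ∈ R, (↑(Tfun τ) : Set G) ⊆ (↑L' : Set G) := by
    intro τ hτ
    refine Finset.coe_subset.mpr ?_
    intro x hx
    simp only [hL', Finset.mem_union, Finset.mem_biUnion]
    exact Or.inr ⟨τ, hτ, hx⟩
  refine ⟨L', hLsub, ?_, ?_, ?_, ?_⟩
  · -- L' ⊆ P
    intro x hx
    simp only [hL', Finset.coe_union, Set.mem_union, Finset.coe_biUnion,
      Set.mem_iUnion] at hx
    rcases hx with (hx | hx) | hx
    · exact hLP hx
    · exact slabSet_subset f P m (hT₀1 hx)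
    · obtain ⟨τ, -, hx⟩ := hx
      exact slabSet_subset f P m (hT1 τ hx)
  · -- new letters are deep
    intro ℓ hℓ
    simp only [hL', Finset.mem_union, Finset.mem_biUnion] at hℓ
    rcases hℓ with (hℓ | hℓ) | hℓ
    · exact Or.inl hℓ
    · exact Or.inr (lt_of_mem_slabSet (hT₀1 hℓ))
    · obtain ⟨τ, -, hℓ⟩ := hℓ
      exact Or.inr (lt_of_mem_slabSet (hT1 τ hℓ))
  · -- the cover at level m+1
    intro p hp
    obtain ⟨ρ, hρ, hy⟩ := hcov p hp
    set y : G := ρ⁻¹ * p with hydef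
    have hρP : ρ ∈ P := (Subgroup.closure_le P).2 hLP hρ
    have hyP : y ∈ P := P.mul_mem (P.inv_mem hρP) hp
    obtain ⟨τ, hτR, hτy⟩ := hRcov y hyP
    have hex : ∃ x : G, x ∈ deepSubgroup f P m ∧ τ⁻¹ * x ∈ deepSubgroup f P (m + 1) :=
      ⟨y, hy, hτy⟩
    have hspec : σf τ ∈ deepSubgroup f P m ∧ τ⁻¹ * σf τ ∈ deepSubgroup f P (m + 1) := by
      simp only [hσf, dif_pos hex]; exact hex.choose_spec
    refine ⟨ρ * σf τ, ?_, ?_⟩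
    · exact Subgroup.mul_mem _ (Subgroup.closure_mono hsubL hρ)
        (Subgroup.closure_mono (hsubT τ hτR) (hT2 τ))
    · have halg : (ρ * σf τ)⁻¹ * p = (τ⁻¹ * σf τ)⁻¹ * (τ⁻¹ * y) := by
        rw [hydef]; group
      rw [halg]
      exact Subgroup.mul_mem _ (Subgroup.inv_mem _ hspec.2) hτy
  · -- the target is generated
    have : target = ρ₀ * (ρ₀⁻¹ * target) := by group
    rw [this]
    exact Subgroup.mul_mem _ (Subgroup.closure_mono hsubL hρ₀)
      (Subgroup.closure_mono hsubT₀ hT₀2)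

end Aux3


/-- If `G` is a Hausdorff topological group which is left precompact but not
pseudocompact, and `P` is a countable dense subgroup of `G`, then there is a
subset `L ⊆ P` which is closed in `G`, discrete in its subspace topology, and
generates exactly `P`. In particular, `L` is a closed suitable set for `G`. -/
theorem exists_closed_discrete_generating_set_of_countable_dense_subgroup
    {G : Type*} [Group G] [TopologicalSpace G] [IsTopologicalGroup G] [T2Space G]
    (hpre : ∀ U ∈ nhds (1 : G), ∃ F : Set G, F.Finite ∧ F * U = Set.univ)
    (hnpc : ¬ ∀ f : G → ℝ, Continuous f → ∃ M : ℝ, ∀ x : G, |f x| ≤ M)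
    (P : Subgroup G) (hPc : (P : Set G).Countable) (hPd : Dense (P : Set G)) :
    ∃ L : Set G, L ⊆ (P : Set G) ∧ IsClosed L ∧ DiscreteTopology L ∧
      Subgroup.closure L = P := by
  classical
  push_neg at hnpc
  obtain ⟨f₀, hf₀c, hf₀u⟩ := hnpc
  set f : G → ℝ := fun x => |f₀ x| + 2 with hfdef
  have hf : Continuous f := hf₀c.abs.add continuous_const
  have hf2 : ∀ x, (2 : ℝ) ≤ f x := by
    intro x
    have : (0:ℝ) ≤ |f₀ x| := abs_nonneg _
    simp only [hfdef]; linarith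
  have hu : ∀ M : ℝ, ∃ x : G, M < f x := by
    intro M
    obtain ⟨x, hx⟩ := hf₀u M
    refine ⟨x, ?_⟩
    have : (0:ℝ) ≤ (2:ℝ) := by norm_num
    simp only [hfdef]; linarith
  -- P is contained in the level-0 deep subgroup
  have hbase0 : ∀ p ∈ P, p ∈ deepSubgroup f P 0 := by
    intro p hp
    refine subset_deepSubgroup (mem_slabSet hp ?_)
    have := hf2 p
    push_cast
    linarith
  -- enumeration of P
  have hPne : (P : Set G).Nonempty := ⟨1, P.one_mem⟩
  obtain ⟨u, hurange⟩ := hPc.exists_eq_range hPne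
  have huP : ∀ m, u m ∈ P := by
    intro m
    have : u m ∈ (P : Set G) := hurange ▸ Set.mem_range_self m
    exact this
  have husurj : ∀ p ∈ P, ∃ m, u m = p := by
    intro p hp
    have : p ∈ Set.range u := hurange ▸ hp
    exact this
  -- the invariant
  set Inv : ℕ → Finset G → Prop := fun m L =>
    (↑L : Set G) ⊆ (P : Set G) ∧
    ∀ p ∈ P, ∃ ρ, ρ ∈ Subgroup.closure (↑L : Set G) ∧ ρ⁻¹ * p ∈ deepSubgroup f P m
    with hInv
  have base : Inv 0 ∅ := by
    constructor
    · simp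
    · intro p hp
      exact ⟨1, Subgroup.one_mem _, by simpa using hbase0 p hp⟩
  have step : ∀ (m : ℕ) (L : Finset G), Inv m L →
      ∃ L' : Finset G, L ⊆ L' ∧ Inv (m + 1) L' ∧
        (∀ ℓ ∈ L', ℓ ∈ L ∨ (m : ℝ) < f ℓ) ∧
        u m ∈ Subgroup.closure (↑L' : Set G) := by
    intro m L hL
    obtain ⟨L', h1, h2, h3, h4, h5⟩ :=
      step_lemma hf hu hPd hpre m L hL.1 hL.2 (u m) (huP m)
    exact ⟨L', h1, ⟨h2, h4⟩, h3, h5⟩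
  choose stepF hstep1 hstep2 hstep3 hstep4 using step
  -- the recursive sequence of finite sets
  set seq : (m : ℕ) → {L : Finset G // Inv m L} := fun m =>
    Nat.rec (motive := fun m => {L : Finset G // Inv m L})
      ⟨∅, base⟩ (fun m prev => ⟨stepF m prev.1 prev.2, hstep2 m prev.1 prev.2⟩) m
    with hseq
  have hseq_succ : ∀ m, (seq (m+1)).1 = stepF m (seq m).1 (seq m).2 := fun m => rfl
  have hmono : ∀ m, (seq m).1 ⊆ (seq (m+1)).1 := by
    intro m
    rw [hseq_succ m]
    exact hstep1 m (seq m).1 (seq m).2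
  have hmono' : ∀ m m', m ≤ m' → (seq m).1 ⊆ (seq m').1 := by
    intro m m' h
    induction h with
    | refl => exact subset_rfl
    | step h ih => exact ih.trans (hmono _)
  have hnew : ∀ m, ∀ ℓ ∈ (seq (m+1)).1, ℓ ∈ (seq m).1 ∨ (m : ℝ) < f ℓ := by
    intro m
    rw [hseq_succ m]
    exact hstep3 m (seq m).1 (seq m).2
  have hgen : ∀ m, u m ∈ Subgroup.closure (↑(seq (m+1)).1 : Set G) := by
    intro m
    have := hstep4 m (seq m).1 (seq m).2
    rwa [← hseq_succ m] at this
  -- the final set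
  set L : Set G := ⋃ m, (↑(seq m).1 : Set G) with hLdef
  have hLP : L ⊆ (P : Set G) := by
    intro x hx
    simp only [hLdef, Set.mem_iUnion] at hx
    obtain ⟨m, hm⟩ := hx
    exact (seq m).2.1 hm
  -- bounded parts are contained in a single stage
  have hstage : ∀ (M k : ℕ), ∀ x ∈ (seq (M + k)).1, f x ≤ (M : ℝ) → x ∈ (seq M).1 := by
    intro M k
    induction k with
    | zero => intro x hx _; exact hx
    | succ k ih =>
        intro x hx hfx
        rcases hnew (M + k) x hx with h | h
        · exact ih x h hfx
        · exfalso
          have : (M : ℝ) ≤ ((M + k : ℕ) : ℝ) := by push_cast; linarith [Nat.cast_nonneg (α := ℝ) k]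
          linarith
  have hfin : ∀ M : ℕ, L ∩ f ⁻¹' Set.Iic (M : ℝ) ⊆ (↑(seq M).1 : Set G) := by
    intro M x hx
    obtain ⟨hxL, hxf⟩ := hx
    simp only [hLdef, Set.mem_iUnion] at hxL
    obtain ⟨m, hm⟩ := hxL
    rcases le_or_gt m M with h | h
    · exact hmono' m M h hm
    · obtain ⟨k, rfl⟩ := Nat.exists_eq_add_of_le (le_of_lt h)
      exact hstage M k x hm hxf
  -- local finiteness
  have hlocfin : ∀ g : G, ∃ Ω : Set G, IsOpen Ω ∧ g ∈ Ω ∧ (L ∩ Ω) ⊆ (↑(seq ⌈f g + 1⌉₊).1 : Set G) := by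
    intro g
    refine ⟨f ⁻¹' Set.Iio (f g + 1), (isOpen_Iio).preimage hf, by simp, ?_⟩
    intro x hx
    obtain ⟨hxL, hxΩ⟩ := hx
    refine hfin ⌈f g + 1⌉₊ ⟨hxL, ?_⟩
    have h1 : f x < f g + 1 := hxΩ
    have h2 : f g + 1 ≤ (⌈f g + 1⌉₊ : ℝ) := Nat.le_ceil _
    simp only [Set.mem_preimage, Set.mem_Iic]
    linarith
  -- L is closed
  have hLclosed : IsClosed L := by
    rw [← closure_subset_iff_isClosed]
    intro x hx
    obtain ⟨Ω, hΩo, hgΩ, hsub⟩ := hlocfin x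
    have hLsplit : L = (L ∩ Ω) ∪ (L \ Ω) := by
      ext y; by_cases hy : y ∈ Ω <;> simp [hy]
    rw [hLsplit, closure_union] at hx
    rcases hx with hx | hx
    · have hfinset : (L ∩ Ω).Finite := ((seq _).1.finite_toSet).subset hsub
      rw [hfinset.isClosed.closure_eq] at hx
      exact hLsplit ▸ Or.inl hx
    · exfalso
      rw [mem_closure_iff] at hx
      obtain ⟨y, hy1, hy2⟩ := hx Ω hΩo hgΩ
      exact hy2.2 hy1
  -- L is discrete
  have hLdisc : DiscreteTopology L := by
    rw [discreteTopology_iff_isOpen_singleton]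
    rintro ⟨ℓ, hℓ⟩
    obtain ⟨Ω, hΩo, hgΩ, hsub⟩ := hlocfin ℓ
    set F : Set G := (↑(seq ⌈f ℓ + 1⌉₊).1 : Set G) \ {ℓ} with hF
    have hFfin : F.Finite := ((seq _).1.finite_toSet).diff
    have hU : IsOpen (Ω ∩ Fᶜ) := hΩo.inter hFfin.isClosed.isOpen_compl
    have key : Subtype.val ⁻¹' (Ω ∩ Fᶜ) = ({⟨ℓ, hℓ⟩} : Set L) := by
      ext ⟨y, hy⟩
      simp only [Set.mem_preimage, Set.mem_inter_iff, Set.mem_compl_iff, Set.mem_singleton_iff,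
        Subtype.mk.injEq, hF, Set.mem_diff, not_and, not_not]
      constructor
      · rintro ⟨hyΩ, himp⟩
        exact himp (hsub ⟨hy, hyΩ⟩)
      · rintro rfl
        exact ⟨hgΩ, fun _ => rfl⟩
    rw [← key]
    exact hU.preimage continuous_subtype_val
  -- L generates exactly P
  have hLgen : Subgroup.closure L = P := by
    apply le_antisymm
    · exact (Subgroup.closure_le P).2 hLP
    · intro p hp
      obtain ⟨m, rfl⟩ := husurj p hp
      refine Subgroup.closure_mono ?_ (hgen m)
      intro y hy
      simp only [hLdef, Set.mem_iUnion]
      exact ⟨m + 1, hy⟩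
  exact ⟨L, hLP, hLclosed, hLdisc, hLgen⟩
end

section
/- Every separable Hausdorff topological group G that is not pseudocompact has a closed suitable set; that is, there exists a subset S of G such that S is closed in G, S is discrete in its subspace topology, and the subgroup generated by S is dense in G. -/
open Set Topology Pointwise

section Helpers

variable {G : Type*} [Group G]

/-- A set which is locally finite (every point of the space has an open
neighbourhood meeting it in a finite set) is closed and discrete. -/
lemma aux_closed_discrete {X : Type*} [TopologicalSpace X] [T1Space X] {S : Set X}
    (h : ∀ g : X, ∃ U : Set X, IsOpen U ∧ g ∈ U ∧ (S ∩ U).Finite) :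
    IsClosed S ∧ DiscreteTopology S := by
  have key : ∀ g : X, ∃ U : Set X, IsOpen U ∧ g ∈ U ∧ S ∩ U ⊆ {g} := by
    intro g
    obtain ⟨U, hU, hgU, hfin⟩ := h g
    refine ⟨U \ ((S ∩ U) \ {g}), hU.sdiff ((hfin.subset diff_subset).isClosed), ⟨hgU, ?_⟩, ?_⟩
    · simp
    · rintro x ⟨hxS, hxU, hx2⟩
      by_contra hne
      exact hx2 ⟨⟨hxS, hxU⟩, hne⟩
  constructor
  · rw [← isOpen_compl_iff, isOpen_iff_mem_nhds]
    intro g hg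
    obtain ⟨U, hU, hgU, hsub⟩ := key g
    refine Filter.mem_of_superset (hU.mem_nhds hgU) ?_
    intro x hxU hxS
    have : x = g := hsub ⟨hxS, hxU⟩
    exact hg (this ▸ hxS)
  · rw [discreteTopology_iff_isOpen_singleton]
    rintro ⟨s, hs⟩
    obtain ⟨U, hU, hsU, hsub⟩ := key s
    rw [isOpen_induced_iff]
    refine ⟨U, hU, ?_⟩
    ext ⟨y, hy⟩
    simp only [mem_preimage, mem_singleton_iff, Subtype.mk.injEq]
    constructor
    · intro hyU
      exact hsub ⟨hy, hyU⟩
    · rintro rfl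
      exact hsU

/-- Every element of the subgroup generated by a set is in the subgroup
generated by a finite subset of it. -/
lemma aux_letters {O : Set G} {x : G} (hx : x ∈ Subgroup.closure O) :
    ∃ Λ : Set G, Λ.Finite ∧ Λ ⊆ O ∧ x ∈ Subgroup.closure Λ := by
  have hx' : x ∈ Submonoid.closure (O ∪ O⁻¹) := by
    rw [← Subgroup.closure_toSubmonoid]
    exact hx
  obtain ⟨l, hl, hprod⟩ := Submonoid.exists_list_of_mem_closure hx'
  refine ⟨{z | z ∈ O ∧ (z ∈ l ∨ z⁻¹ ∈ l)}, ?_, fun z hz => hz.1, ?_⟩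
  · refine Set.Finite.subset (l.finite_toSet.union (l.finite_toSet.image (·⁻¹))) ?_
    rintro z ⟨_, h | h⟩
    · exact Or.inl h
    · exact Or.inr ⟨z⁻¹, h, inv_inv z⟩
  · rw [← hprod]
    refine list_prod_mem (fun y hy => ?_)
    rcases hl y hy with h | h
    · exact Subgroup.subset_closure ⟨h, Or.inl hy⟩
    · have h1 : y⁻¹ ∈ {z | z ∈ O ∧ (z ∈ l ∨ z⁻¹ ∈ l)} :=
        ⟨Set.mem_inv.mp h, Or.inr (by rw [inv_inv]; exact hy)⟩
      simpa using (Subgroup.closure {z | z ∈ O ∧ (z ∈ l ∨ z⁻¹ ∈ l)}).inv_mem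
        (Subgroup.subset_closure h1)

end Helpers

/-- Every separable Hausdorff topological group which is not pseudocompact has a
closed suitable set: a closed, discrete-in-itself subset generating a dense
subgroup. -/
theorem separable_not_pseudocompact_has_closed_suitable_set
    {G : Type*} [Group G] [TopologicalSpace G] [IsTopologicalGroup G] [T2Space G]
    [TopologicalSpace.SeparableSpace G]
    (hnpc : ¬ ∀ f : G → ℝ, Continuous f → ∃ M : ℝ, ∀ x : G, |f x| ≤ M) :
    ∃ S : Set G, IsClosed S ∧ DiscreteTopology S ∧
      Dense (Subgroup.closure S : Set G) := by
  classical
  push_neg at hnpc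
  obtain ⟨f₀, hf₀c, hf₀u⟩ := hnpc
  set F : G → ℝ := fun x => |f₀ x| with hF
  have hFc : Continuous F := hf₀c.abs
  set O : ℕ → Set G := fun n => {x | (n : ℝ) < F x} with hO
  have hOopen : ∀ n, IsOpen (O n) := fun n => isOpen_lt continuous_const hFc
  have hOne : ∀ n, (O n).Nonempty := by
    intro n
    obtain ⟨x, hx⟩ := hf₀u n
    exact ⟨x, hx⟩
  set H : ℕ → Subgroup G := fun n => Subgroup.closure (O n) with hHdef
  have hOsubH : ∀ n, O n ⊆ (H n : Set G) := fun n => Subgroup.subset_closure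
  have hHopen : ∀ n, IsOpen ((H n : Set G)) := by
    intro n
    obtain ⟨u, hu⟩ := hOne n
    exact Subgroup.isOpen_of_mem_nhds (H n)
      (Filter.mem_of_superset ((hOopen n).mem_nhds hu) (hOsubH n))
  obtain ⟨D, hDc, hDd⟩ := TopologicalSpace.exists_countable_dense G
  have hDne : D.Nonempty := hDd.nonempty
  obtain ⟨d, hd⟩ := hDc.exists_eq_range hDne
  by_cases hfi : ∀ n, (H n).FiniteIndex
  · -- Case (ii): all the subgroups H n have finite index.
    set N : ℕ → Subgroup G := fun n => (H n).normalCore with hN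
    have hNnormal : ∀ n, (N n).Normal := fun n => Subgroup.normalCore_normal _
    have hNfi : ∀ n, (N n).FiniteIndex := by
      intro n
      haveI := hfi n
      exact Subgroup.finiteIndex_normalCore (H := H n)
    have hNleH : ∀ n, N n ≤ H n := fun n => Subgroup.normalCore_le _
    have hfinq : ∀ n, Finite (G ⧸ N n) := by
      intro n
      haveI := hNfi n
      exact Subgroup.finite_quotient_of_finiteIndex (H := N n)
    -- a finite set of coset representatives for N 0
    obtain ⟨F₀, hF₀fin, hF₀⟩ : ∃ F₀ : Set G, F₀.Finite ∧
        ∀ g : G, g ∈ Subgroup.closure F₀ ⊔ N 0 := by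
      haveI := hfinq 0
      refine ⟨Set.range (fun q : G ⧸ N 0 => Quotient.out q), Set.finite_range _, ?_⟩
      intro g
      set t := (QuotientGroup.mk g : G ⧸ N 0).out with ht'
      have ht : (QuotientGroup.mk t : G ⧸ N 0) = QuotientGroup.mk g := by
        rw [ht']
        exact Quotient.out_eq _
      have htN : t⁻¹ * g ∈ N 0 := QuotientGroup.eq.mp ht
      have hgt : g = t * (t⁻¹ * g) := by group
      rw [hgt]
      exact mul_mem (Subgroup.mem_sup_left (Subgroup.subset_closure ⟨_, rfl⟩))
        (Subgroup.mem_sup_right htN)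
    -- finite sets Φ m ⊆ O m regenerating N m over N (m+1)
    have hPhi : ∀ m : ℕ, ∃ Φ : Set G, Φ.Finite ∧ Φ ⊆ O m ∧
        N m ≤ Subgroup.closure Φ ⊔ N (m + 1) := by
      intro m
      haveI := hfinq (m + 1)
      have hchoice : ∀ q : G ⧸ N (m + 1), ∃ Λ : Set G, Λ.Finite ∧ Λ ⊆ O m ∧
          ∀ ν ∈ N m, (QuotientGroup.mk ν : G ⧸ N (m + 1)) = q →
            ν ∈ Subgroup.closure Λ ⊔ N (m + 1) := by
        intro q
        by_cases hq : ∃ y, y ∈ N m ∧ (QuotientGroup.mk y : G ⧸ N (m + 1)) = q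
        · obtain ⟨y, hyN, hyq⟩ := hq
          have hyH : y ∈ Subgroup.closure (O m) := hNleH m hyN
          obtain ⟨Λ, hΛfin, hΛO, hyΛ⟩ := aux_letters hyH
          refine ⟨Λ, hΛfin, hΛO, ?_⟩
          intro ν hνN hνq
          have h1 : (QuotientGroup.mk y : G ⧸ N (m + 1)) = QuotientGroup.mk ν := by
            rw [hyq, hνq]
          have h2 : y⁻¹ * ν ∈ N (m + 1) := QuotientGroup.eq.mp h1
          have hνy : ν = y * (y⁻¹ * ν) := by group
          rw [hνy]
          exact mul_mem (Subgroup.mem_sup_left hyΛ) (Subgroup.mem_sup_right h2)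
        · refine ⟨∅, finite_empty, empty_subset _, ?_⟩
          intro ν hνN hνq
          exact absurd ⟨ν, hνN, hνq⟩ hq
      choose Λq hΛqfin hΛqO hΛq using hchoice
      refine ⟨⋃ q, Λq q, Set.finite_iUnion hΛqfin, Set.iUnion_subset hΛqO, ?_⟩
      intro ν hν
      have h3 := hΛq (QuotientGroup.mk ν) ν hν rfl
      have h4 : Subgroup.closure (Λq (QuotientGroup.mk ν)) ⊔ N (m + 1) ≤
          Subgroup.closure (⋃ q, Λq q) ⊔ N (m + 1) :=
        sup_le_sup_right (Subgroup.closure_mono (subset_iUnion Λq _)) _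
      exact h4 h3
    choose Φ hΦfin hΦO hΦ using hPhi
    -- increasing chain of finitely generated pieces
    set Γ : ℕ → Subgroup G := fun m =>
      Subgroup.closure (F₀ ∪ ⋃ k ∈ Finset.range m, Φ k) with hΓ
    have hΓmono : ∀ {m n : ℕ}, m ≤ n → Γ m ≤ Γ n := by
      intro m n hmn
      apply Subgroup.closure_mono
      apply union_subset_union_right
      intro z hz
      simp only [Finset.mem_coe, Finset.mem_range, mem_iUnion, exists_prop] at hz ⊢
      obtain ⟨k, hk, hzk⟩ := hz
      exact ⟨k, by omega, hzk⟩
    have hΦleΓ : ∀ m, Subgroup.closure (Φ m) ≤ Γ (m + 1) := by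
      intro m
      apply Subgroup.closure_mono
      intro z hz
      refine Or.inr (mem_biUnion ?_ hz)
      exact Finset.self_mem_range_succ m
    have hΓtop : ∀ m, Γ m ⊔ N m = ⊤ := by
      intro m
      induction m with
      | zero =>
        rw [eq_top_iff]
        intro g _
        have h0 : Subgroup.closure F₀ ⊔ N 0 ≤ Γ 0 ⊔ N 0 :=
          sup_le_sup_right (Subgroup.closure_mono subset_union_left) _
        exact h0 (hF₀ g)
      | succ m ih =>
        rw [eq_top_iff, ← ih]
        apply sup_le
        · exact le_sup_of_le_left (hΓmono (Nat.le_succ m))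
        · calc N m ≤ Subgroup.closure (Φ m) ⊔ N (m + 1) := hΦ m
            _ ≤ Γ (m + 1) ⊔ N (m + 1) := sup_le_sup_right (hΦleΓ m) _
    -- decompose each d n
    have hdec : ∀ n : ℕ, ∃ p : G × G, p.1 ∈ Γ n ∧ p.2 ∈ N n ∧ d n = p.1 * p.2 := by
      intro n
      haveI := hNnormal n
      have h1 : d n ∈ ((Γ n ⊔ N n : Subgroup G) : Set G) := by
        rw [hΓtop n]
        trivial
      rw [Subgroup.mul_normal] at h1
      obtain ⟨γ, hγ, ν, hν, h⟩ := h1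
      exact ⟨(γ, ν), hγ, hν, h.symm⟩
    choose p hγ hν hdn using hdec
    have hνO : ∀ n, (p n).2 ∈ Subgroup.closure (O n) := fun n => hNleH n (hν n)
    have hlet : ∀ n, ∃ Λ : Set G, Λ.Finite ∧ Λ ⊆ O n ∧ (p n).2 ∈ Subgroup.closure Λ :=
      fun n => aux_letters (hνO n)
    choose Λ hΛfin hΛO hΛ using hlet
    refine ⟨F₀ ∪ (⋃ m, Φ m) ∪ (⋃ n, Λ n), ?_⟩
    set S : Set G := F₀ ∪ (⋃ m, Φ m) ∪ (⋃ n, Λ n) with hS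
    have hΓleS : ∀ m, Γ m ≤ Subgroup.closure S := by
      intro m
      apply Subgroup.closure_mono
      intro z hz
      rcases hz with hz | hz
      · exact Or.inl (Or.inl hz)
      · simp only [Finset.mem_coe, mem_iUnion, exists_prop] at hz
        obtain ⟨k, _, hk⟩ := hz
        exact Or.inl (Or.inr (mem_iUnion.mpr ⟨k, hk⟩))
    have hΛleS : ∀ n, Subgroup.closure (Λ n) ≤ Subgroup.closure S := by
      intro n
      apply Subgroup.closure_mono
      intro z hz
      exact Or.inr (mem_iUnion.mpr ⟨n, hz⟩)
    have hgen : ∀ n, d n ∈ Subgroup.closure S := by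
      intro n
      rw [hdn n]
      exact mul_mem (hΓleS n (hγ n)) (hΛleS n (hΛ n))
    have hdense : Dense ((Subgroup.closure S : Subgroup G) : Set G) := by
      apply hDd.mono
      rw [hd]
      rintro y ⟨n, rfl⟩
      exact hgen n
    have hloc : ∀ g : G, ∃ U : Set G, IsOpen U ∧ g ∈ U ∧ (S ∩ U).Finite := by
      intro g
      obtain ⟨M, hM⟩ := exists_nat_gt (F g)
      refine ⟨{x | F x < M}, isOpen_lt hFc continuous_const, hM, ?_⟩
      have hsub : S ∩ {x | F x < M} ⊆
          F₀ ∪ (⋃ m ∈ Finset.range M, (Φ m ∪ Λ m)) := by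
        rintro z ⟨hzS, hzU⟩
        rcases hzS with (hz | hz) | hz
        · exact Or.inl hz
        · obtain ⟨m, hm⟩ := mem_iUnion.mp hz
          have h5 : (m : ℝ) < M := lt_trans (hΦO m hm) hzU
          have h6 : m ∈ Finset.range M := Finset.mem_range.mpr (by exact_mod_cast h5)
          exact Or.inr (mem_biUnion h6 (Or.inl hm))
        · obtain ⟨n, hn⟩ := mem_iUnion.mp hz
          have h5 : (n : ℝ) < M := lt_trans (hΛO n hn) hzU
          have h6 : n ∈ Finset.range M := Finset.mem_range.mpr (by exact_mod_cast h5)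
          exact Or.inr (mem_biUnion h6 (Or.inr hn))
      exact Set.Finite.subset (hF₀fin.union (Set.Finite.biUnion (Finset.range M).finite_toSet
        (fun m _ => (hΦfin m).union (hΛfin m)))) hsub
    obtain ⟨hcl, hdisc⟩ := aux_closed_discrete hloc
    exact ⟨hcl, hdisc, hdense⟩
  · -- Case (i): some H c₀ has infinite index.
    push_neg at hfi
    obtain ⟨c₀, hc₀⟩ := hfi
    set Hs : Subgroup G := H c₀ with hHs
    have hHsOpen : IsOpen ((Hs : Set G)) := hHopen c₀
    -- conjugates of Hs also have infinite index
    set K : G → Subgroup G := fun δ =>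
      Subgroup.comap ((MulAut.conj δ⁻¹) : G ≃* G).toMonoidHom Hs with hK
    have hKmem : ∀ δ z : G, z ∈ K δ ↔ δ⁻¹ * z * δ ∈ Hs := by
      intro δ z
      simp [hK, Subgroup.mem_comap, MulAut.conj_apply]
    have hKfi : ∀ δ : G, ¬(K δ).FiniteIndex := by
      intro δ hfin
      apply hc₀
      have hidx : (K δ).index = Hs.index :=
        Subgroup.index_comap_of_surjective _ (MulEquiv.surjective _)
      exact ⟨hidx ▸ hfin.index_ne_zero⟩
    -- the avoidance property, via B. H. Neumann's lemma
    have avoid : ∀ (Q : Finset G) (δ : G), ∃ z : G,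
        ∀ p ∈ Q, z ∉ p • (Hs : Set G) ∧ z * δ ∉ p • (Hs : Set G) := by
      intro Q δ
      by_contra hcon
      push_neg at hcon
      -- build a finite coset cover
      have hcover : ⋃ i ∈ (Q ×ˢ ({false, true} : Finset Bool)),
          (if i.2 then i.1 else i.1 * δ⁻¹) •
            (((if i.2 then Hs else K δ) : Subgroup G) : Set G) = Set.univ := by
        rw [Set.eq_univ_iff_forall]
        intro z
        obtain ⟨p, hp, hz⟩ := hcon z
        rw [Set.mem_iUnion₂]
        rcases imp_iff_not_or.mp hz with hz1 | hz2
        · rw [not_not] at hz1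
          exact ⟨(p, true), by simp [hp], by simpa using hz1⟩
        · refine ⟨(p, false), by simp [hp], ?_⟩
          simp only [if_neg Bool.false_ne_true]
          rw [mem_leftCoset_iff] at hz2 ⊢
          rw [SetLike.mem_coe, hKmem]
          have heq : δ⁻¹ * ((p * δ⁻¹)⁻¹ * z) * δ = p⁻¹ * (z * δ) := by group
          rw [heq]
          exact hz2
      obtain ⟨k, hk, hfin⟩ := Subgroup.exists_finiteIndex_of_leftCoset_cover hcover
      rcases k with ⟨p, b⟩
      cases b
      · simp only [if_neg Bool.false_ne_true] at hfin
        exact hKfi δ hfin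
      · simp only [if_pos rfl] at hfin
        exact hc₀ hfin
    choose xc hxc using avoid
    let A : ℕ → Finset G :=
      fun n => Nat.rec (∅ : Finset G)
        (fun k Ak => Ak ∪ {xc Ak (d k), xc Ak (d k) * d k}) n
    let x : ℕ → G := fun n => xc (A n) (d n)
    have hA : ∀ n, A (n + 1) = A n ∪ {x n, x n * d n} := fun n => rfl
    have hAmono : ∀ {m n : ℕ}, m ≤ n → A m ⊆ A n := by
      intro m n hmn
      induction n, hmn using Nat.le_induction with
      | base => exact Finset.Subset.refl _
      | succ n hmn ih =>
        refine ih.trans ?_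
        rw [hA n]
        exact Finset.subset_union_left
    have hmemA : ∀ n y, y ∈ ({x n, x n * d n} : Set G) → y ∈ A (n + 1) := by
      intro n y hy
      rw [hA n]
      rcases hy with rfl | hy
      · exact Finset.mem_union_right _ (Finset.mem_insert_self _ _)
      · rw [Set.mem_singleton_iff] at hy
        subst hy
        exact Finset.mem_union_right _ (Finset.mem_insert_of_mem (Finset.mem_singleton_self _))
    -- transitivity within one left coset
    have hcoset : ∀ {g a b : G}, a ∈ g • (Hs : Set G) → b ∈ g • (Hs : Set G) →
        a ∈ b • (Hs : Set G) := by
      intro g a b ha hb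
      rw [mem_leftCoset_iff] at ha hb ⊢
      have heq : b⁻¹ * a = (g⁻¹ * b)⁻¹ * (g⁻¹ * a) := by group
      rw [heq]
      exact Hs.mul_mem (Hs.inv_mem hb) ha
    refine ⟨⋃ n, ({x n, x n * d n} : Set G), ?_⟩
    set S : Set G := ⋃ n, ({x n, x n * d n} : Set G) with hS
    -- separation between different steps
    have hsep : ∀ {m n : ℕ}, m < n → ∀ a ∈ ({x n, x n * d n} : Set G),
        ∀ b ∈ ({x m, x m * d m} : Set G), a ∉ b • (Hs : Set G) := by
      intro m n hmn a ha b hb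
      have hbA : b ∈ A n := hAmono hmn (hmemA m b hb)
      have h2 := hxc (A n) (d n) b hbA
      rcases ha with rfl | ha
      · exact h2.1
      · rw [Set.mem_singleton_iff] at ha
        subst ha
        exact h2.2
    have hloc : ∀ g : G, ∃ U : Set G, IsOpen U ∧ g ∈ U ∧ (S ∩ U).Finite := by
      intro g
      refine ⟨g • (Hs : Set G), hHsOpen.leftCoset g, ?_, ?_⟩
      · rw [mem_leftCoset_iff]
        simpa using Hs.one_mem
      · by_cases hne : (S ∩ g • (Hs : Set G)).Nonempty
        · obtain ⟨a₀, ha₀S, ha₀U⟩ := hne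
          obtain ⟨n₀, ha₀⟩ := Set.mem_iUnion.mp ha₀S
          refine Set.Finite.subset (Set.toFinite ({x n₀, x n₀ * d n₀} : Set G)) ?_
          rintro y ⟨hyS, hyU⟩
          obtain ⟨n, hy⟩ := Set.mem_iUnion.mp hyS
          rcases lt_trichotomy n n₀ with h | h | h
          · exact absurd (hcoset ha₀U hyU) (hsep h a₀ ha₀ y hy)
          · subst h
            exact hy
          · exact absurd (hcoset hyU ha₀U) (hsep h y hy a₀ ha₀)
        · rw [Set.not_nonempty_iff_eq_empty] at hne
          rw [hne]
          exact Set.finite_empty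
    have hgen : ∀ n, d n ∈ Subgroup.closure S := by
      intro n
      have h1 : x n ∈ S := Set.mem_iUnion.mpr ⟨n, by simp⟩
      have h2 : x n * d n ∈ S := Set.mem_iUnion.mpr ⟨n, by simp⟩
      have h3 : (x n)⁻¹ * (x n * d n) ∈ Subgroup.closure S :=
        mul_mem (inv_mem (Subgroup.subset_closure h1)) (Subgroup.subset_closure h2)
      simpa using h3
    have hdense : Dense ((Subgroup.closure S : Subgroup G) : Set G) := by
      apply hDd.mono
      rw [hd]
      rintro y ⟨n, rfl⟩
      exact hgen n
    obtain ⟨hcl, hdisc⟩ := aux_closed_discrete hloc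
    exact ⟨hcl, hdisc, hdense⟩
end

section
/- Every compact metrizable topological group G has a suitable set; that is, there exists a subset S of G such that S is discrete in its subspace topology, S ∪ {1} is closed in G, and the subgroup generated by S is dense in G. -/
open Set Pointwise

section Aux

variable {G : Type*} [Group G] [TopologicalSpace G] [IsTopologicalGroup G]

/-- Generic dependent recursion producing a sequence with invariant `Q` and step relation `R`. -/
lemma exists_seq_rec {α : Type*} (Q : ℕ → α → Prop) (R : ℕ → α → α → Prop)
    (h0 : ∃ a, Q 0 a) (hstep : ∀ k a, Q k a → ∃ b, Q (k+1) b ∧ R k a b) :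
    ∃ f : ℕ → α, (∀ k, Q k (f k)) ∧ ∀ k, R k (f k) (f (k+1)) := by
  choose a0 ha0 using h0
  choose F hF1 hF2 using hstep
  let g : ∀ k : ℕ, {x : α // Q k x} := fun k =>
    Nat.rec ⟨a0, ha0⟩ (fun k p => ⟨F k p.1 p.2, hF1 k p.1 p.2⟩) k
  exact ⟨fun k => (g k).1, fun k => (g k).2, fun k => hF2 k (g k).1 (g k).2⟩

/-- Every open neighborhood of the connected component of 1 contains an open subgroup. -/
lemma exists_openSubgroup_subset [CompactSpace G] [T2Space G] {U : Set G} (hU : IsOpen U)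
    (hCU : connectedComponent (1 : G) ⊆ U) : ∃ H : OpenSubgroup G, (H : Set G) ⊆ U := by
  obtain ⟨W, hW, h1W, hWU⟩ : ∃ W : Set G, IsClopen W ∧ 1 ∈ W ∧ W ⊆ U := by
    have hcc := connectedComponent_eq_iInter_isClopen (1 : G)
    have hcompl : IsCompact (Uᶜ) := (hU.isClosed_compl).isCompact
    have hempty : (Uᶜ ∩ ⋂ s : { s : Set G // IsClopen s ∧ (1:G) ∈ s }, ↑s) = ∅ := by
      rw [← hcc]
      rw [Set.eq_empty_iff_forall_notMem]
      intro x hx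
      exact hx.1 (hCU hx.2)
    obtain ⟨t, ht⟩ := hcompl.elim_finite_subfamily_closed _
      (fun s : { s : Set G // IsClopen s ∧ (1:G) ∈ s } => s.2.1.1) hempty
    refine ⟨⋂ s ∈ t, ↑s, ?_, ?_, ?_⟩
    · exact Set.Finite.isClopen_biInter t.finite_toSet (fun s _ => s.2.1)
    · exact Set.mem_iInter₂.2 fun s _ => s.2.2
    · intro x hx
      by_contra hxU
      have hmem : x ∈ (Uᶜ ∩ ⋂ s ∈ t, ((s : { s : Set G // IsClopen s ∧ (1:G) ∈ s }) : Set G)) :=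
        ⟨hxU, hx⟩
      rw [ht] at hmem
      exact hmem
  obtain ⟨H, hH⟩ := IsTopologicalGroup.exist_openSubgroup_sub_clopen_nhds_of_one hW h1W
  exact ⟨H, hH.trans hWU⟩

omit [TopologicalSpace G] [IsTopologicalGroup G] in
lemma fin_closure {S : Set G} {x : G} (hx : x ∈ Subgroup.closure S) :
    ∃ F : Set G, F.Finite ∧ F ⊆ S ∧ x ∈ Subgroup.closure F := by
  induction hx using Subgroup.closure_induction with
  | mem y hy => exact ⟨{y}, Set.finite_singleton y, Set.singleton_subset_iff.2 hy,
      Subgroup.subset_closure rfl⟩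
  | one => exact ⟨∅, Set.finite_empty, Set.empty_subset _, Subgroup.one_mem _⟩
  | mul y z _ _ hy hz =>
      obtain ⟨F1, hF1f, hF1S, hy1⟩ := hy
      obtain ⟨F2, hF2f, hF2S, hz2⟩ := hz
      exact ⟨F1 ∪ F2, hF1f.union hF2f, Set.union_subset hF1S hF2S,
        Subgroup.mul_mem _ (Subgroup.closure_mono Set.subset_union_left hy1)
          (Subgroup.closure_mono Set.subset_union_right hz2)⟩
  | inv y _ hy =>
      obtain ⟨F, hFf, hFS, hy1⟩ := hy
      exact ⟨F, hFf, hFS, Subgroup.inv_mem _ hy1⟩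

/-- any element of the connected component of 1 lies in the subgroup generated by finitely
many elements of any given neighborhood of 1 -/
lemma conn_gen {V : Set G} (hV : V ∈ nhds (1 : G)) {g : G}
    (hg : g ∈ connectedComponent (1 : G)) :
    ∃ F : Set G, F.Finite ∧ F ⊆ V ∧ g ∈ Subgroup.closure F := by
  obtain ⟨V₀, hV₀V, hV₀open, h1V₀⟩ := mem_nhds_iff.1 hV
  set C0 : Set G := connectedComponent (1 : G) with hC0
  set K : Subgroup G := Subgroup.closure (V₀ ∩ C0) with hK
  have hC0K : C0 ⊆ (K : Set G) := by
    by_contra hnot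
    rw [Set.not_subset] at hnot
    obtain ⟨b, hbC0, hbK⟩ := hnot
    have hu : IsOpen (((K : Set G) ∩ C0) * V₀) := IsOpen.mul_left hV₀open
    have hv : IsOpen ((C0 \ (K : Set G)) * V₀) := IsOpen.mul_left hV₀open
    have hcover : C0 ⊆ ((K : Set G) ∩ C0) * V₀ ∪ (C0 \ (K : Set G)) * V₀ := by
      intro x hx
      by_cases hxK : x ∈ (K : Set G)
      · exact Or.inl ⟨x, ⟨hxK, hx⟩, 1, h1V₀, mul_one x⟩
      · exact Or.inr ⟨x, ⟨hx, hxK⟩, 1, h1V₀, mul_one x⟩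
    have hne1 : (C0 ∩ (((K : Set G) ∩ C0) * V₀)).Nonempty :=
      ⟨1, mem_connectedComponent, 1, ⟨Subgroup.one_mem K, mem_connectedComponent⟩,
        1, h1V₀, mul_one 1⟩
    have hne2 : (C0 ∩ ((C0 \ (K : Set G)) * V₀)).Nonempty :=
      ⟨b, hbC0, b, ⟨hbC0, hbK⟩, 1, h1V₀, mul_one b⟩
    obtain ⟨x, hxC0, hxu, hxv⟩ :=
      isPreconnected_connectedComponent (u := ((K : Set G) ∩ C0) * V₀)
        (v := (C0 \ (K : Set G)) * V₀) hu hv hcover hne1 hne2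
    obtain ⟨a, ⟨haK, haC0⟩, w1, hw1, haw⟩ := hxu
    obtain ⟨b', ⟨hb'C0, hb'K⟩, w2, hw2, hbw⟩ := hxv
    have hw1C0 : a⁻¹ * x ∈ C0 :=
      mul_mem_connectedComponent_one (inv_mem_connectedComponent_one haC0) hxC0
    have hw1V : a⁻¹ * x ∈ V₀ := by
      have : a⁻¹ * x = w1 := by rw [← haw]; group
      rw [this]; exact hw1
    have hxK : x ∈ K := by
      have h1 : a⁻¹ * x ∈ K := Subgroup.subset_closure ⟨hw1V, hw1C0⟩
      have := Subgroup.mul_mem K haK h1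
      simpa using this
    have hw2C0 : b'⁻¹ * x ∈ C0 :=
      mul_mem_connectedComponent_one (inv_mem_connectedComponent_one hb'C0) hxC0
    have hw2V : b'⁻¹ * x ∈ V₀ := by
      have : b'⁻¹ * x = w2 := by rw [← hbw]; group
      rw [this]; exact hw2
    have : b' ∈ K := by
      have h1 : b'⁻¹ * x ∈ K := Subgroup.subset_closure ⟨hw2V, hw2C0⟩
      have := Subgroup.mul_mem K hxK (Subgroup.inv_mem K h1)
      simpa using this
    exact hb'K this
  obtain ⟨F, hFf, hFS, hgF⟩ := fin_closure (hC0K hg)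
  exact ⟨F, hFf, fun y hy => hV₀V (hFS hy).1, hgF⟩

end Aux

/-- Every compact metrizable topological group has a suitable set. -/
theorem compact_metrizable_group_has_suitable_set
    {G : Type*} [Group G] [TopologicalSpace G] [IsTopologicalGroup G]
    [CompactSpace G] [TopologicalSpace.MetrizableSpace G] :
    ∃ S : Set G, IsSuitable S := by
  letI : MetricSpace G := TopologicalSpace.metrizableSpaceMetric G
  set C0 : Set G := connectedComponent (1 : G) with hC0def
  -- a countable dense sequence in C0
  obtain ⟨c, hcC0, hcdense⟩ : ∃ c : ℕ → G, (∀ j, c j ∈ C0) ∧ C0 ⊆ closure (Set.range c) := by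
    haveI : Nonempty ↥C0 := ⟨⟨1, mem_connectedComponent⟩⟩
    obtain ⟨s, hscount, hsdense⟩ := TopologicalSpace.exists_countable_dense ↥C0
    have hsne : s.Nonempty := hsdense.nonempty
    obtain ⟨f, hf⟩ := (hscount.image (Subtype.val)).exists_eq_range (hsne.image _)
    refine ⟨f, ?_, ?_⟩
    · intro j
      have : f j ∈ Subtype.val '' s := by rw [hf]; exact ⟨j, rfl⟩
      obtain ⟨y, _, hy⟩ := this
      rw [← hy]; exact y.2
    · intro x hx
      have : (⟨x, hx⟩ : ↥C0) ∈ closure s := hsdense _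
      have := closure_subtype.1 this
      rwa [hf] at this
  -- shrinking open subgroups
  have hpos : ∀ k : ℕ, (0:ℝ) < 1/(k+1) := by
    intro k; positivity
  obtain ⟨M, hM⟩ : ∃ M : ℕ → OpenSubgroup G,
      ∀ k, (M k : Set G) ⊆ C0 * Metric.ball (1:G) (1/(k+1)) := by
    have : ∀ k : ℕ, ∃ H : OpenSubgroup G, (H : Set G) ⊆ C0 * Metric.ball (1:G) (1/(k+1)) := by
      intro k
      refine exists_openSubgroup_subset (IsOpen.mul_left Metric.isOpen_ball) ?_
      intro x hx
      exact ⟨x, hx, 1, by simpa using hpos k, mul_one x⟩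
    exact ⟨fun k => (this k).choose, fun k => (this k).choose_spec⟩
  obtain ⟨N, hNQ, hNanti⟩ := exists_seq_rec
    (Q := fun k (H : OpenSubgroup G) => (H : Set G) ⊆ C0 * Metric.ball (1:G) (1/(k+1)))
    (R := fun _ (H H' : OpenSubgroup G) => (H' : Set G) ⊆ (H : Set G))
    ⟨M 0, hM 0⟩
    (by
      intro k H hH
      refine ⟨H ⊓ M (k+1), ?_, ?_⟩
      · beta_reduce
        rw [OpenSubgroup.coe_inf]
        exact Set.inter_subset_right.trans (hM (k+1))
      · beta_reduce
        rw [OpenSubgroup.coe_inf]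
        exact Set.inter_subset_left)
  have hNsmall : ∀ k, (N k : Set G) ⊆ C0 * Metric.ball (1:G) (1/(k+1)) := hNQ
  -- coset representatives
  have cosets : ∀ H : OpenSubgroup G, ∃ R : Finset G, ∀ x : G, ∃ r ∈ R, r⁻¹ * x ∈ (H : Set G) := by
    intro H
    have hcover : (Set.univ : Set G) ⊆ ⋃ g : G, g • (H : Set G) := by
      intro x _
      exact Set.mem_iUnion.2 ⟨x, 1, H.one_mem, mul_one x⟩
    obtain ⟨t, ht⟩ := isCompact_univ.elim_finite_subcover (fun g : G => g • (H : Set G))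
      (fun g => H.isOpen.smul g) hcover
    refine ⟨t, fun x => ?_⟩
    obtain ⟨r, hrt, hxr⟩ := Set.mem_iUnion₂.1 (ht (Set.mem_univ x))
    obtain ⟨h, hh, hrh⟩ := hxr
    exact ⟨r, hrt, by rw [← hrh]; simpa using hh⟩
  -- the step lemma: given generators hitting all cosets of N k, extend by small elements
  have keystep : ∀ (k : ℕ) (A : Set G),
      (∀ x : G, ∃ s ∈ Subgroup.closure A, s⁻¹ * x ∈ (N k : Set G)) →
      ∀ r : G, ∃ F : Set G, F.Finite ∧ F ⊆ Metric.ball (1:G) (1/(k+1)) ∧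
        r ∈ Subgroup.closure (A ∪ F) := by
    intro k A hA r
    obtain ⟨s, hsA, hsr⟩ := hA r
    obtain ⟨cc, hccC0, w, hwball, hcw⟩ := hNsmall k hsr
    have hcw' : cc * w = s⁻¹ * r := hcw
    obtain ⟨Fc, hFcfin, hFcball, hccFc⟩ :=
      conn_gen (Metric.ball_mem_nhds (1:G) (hpos k)) hccC0
    refine ⟨Fc ∪ {w}, hFcfin.union (Set.finite_singleton w), ?_, ?_⟩
    · exact Set.union_subset hFcball (Set.singleton_subset_iff.2 hwball)
    · have hs : s ∈ Subgroup.closure (A ∪ (Fc ∪ {w})) :=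
        Subgroup.closure_mono Set.subset_union_left hsA
      have hcc' : cc ∈ Subgroup.closure (A ∪ (Fc ∪ {w})) :=
        Subgroup.closure_mono (Set.subset_union_left.trans Set.subset_union_right) hccFc
      have hw' : w ∈ Subgroup.closure (A ∪ (Fc ∪ {w})) :=
        Subgroup.subset_closure (Or.inr (Or.inr rfl))
      have : r = s * (cc * w) := by rw [hcw']; group
      rw [this]
      exact Subgroup.mul_mem _ hs (Subgroup.mul_mem _ hcc' hw')
  -- construct the generating sets by recursion
  obtain ⟨A, hAQ, hAR⟩ := exists_seq_rec
    (Q := fun k A => A.Finite ∧ (∀ x : G, ∃ s ∈ Subgroup.closure A, s⁻¹ * x ∈ (N k : Set G)) ∧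
      c k ∈ Subgroup.closure A)
    (R := fun k A B => A ⊆ B ∧ B \ A ⊆ Metric.ball (1:G) (1/(k+1)))
    (by
      -- base case
      obtain ⟨R0, hR0⟩ := cosets (N 0)
      obtain ⟨F0, hF0fin, _, hcF0⟩ := conn_gen (Filter.univ_mem) (hcC0 0)
      refine ⟨↑R0 ∪ F0, ⟨(R0.finite_toSet).union hF0fin, fun x => ?_, ?_⟩⟩
      · obtain ⟨r, hrR, hrx⟩ := hR0 x
        exact ⟨r, Subgroup.subset_closure (Or.inl hrR), hrx⟩
      · exact Subgroup.closure_mono Set.subset_union_right hcF0)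
    (by
      -- inductive step
      intro k A hQ
      obtain ⟨hAfin, hAhit, _⟩ := hQ
      obtain ⟨R', hR'⟩ := cosets (N (k+1))
      choose Ffun hFfin hFball hFmem using keystep k A hAhit
      obtain ⟨Fc, hFcfin, hFcball, hcFc⟩ :=
        conn_gen (Metric.ball_mem_nhds (1:G) (hpos k)) (hcC0 (k+1))
      refine ⟨A ∪ ((⋃ r ∈ R', Ffun r) ∪ Fc), ⟨?_, ?_, ?_⟩, ?_, ?_⟩
      · exact hAfin.union ((R'.finite_toSet.biUnion (fun r _ => hFfin r)).union hFcfin)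
      · intro x
        obtain ⟨r, hrR, hrx⟩ := hR' x
        refine ⟨r, ?_, hrx⟩
        have : r ∈ Subgroup.closure (A ∪ Ffun r) := hFmem r
        refine Subgroup.closure_mono ?_ this
        exact Set.union_subset_union_right A
          ((Set.subset_biUnion_of_mem hrR).trans Set.subset_union_left)
      · exact Subgroup.closure_mono
          (Set.subset_union_right.trans Set.subset_union_right) hcFc
      · exact Set.subset_union_left
      · intro x hx
        rcases hx.1 with hxA | hx'
        · exact absurd hxA hx.2
        rcases hx' with hxU | hxFc
        · obtain ⟨r, hrR, hxr⟩ := Set.mem_iUnion₂.1 hxU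
          exact hFball r hxr
        · exact hFcball hxFc)
  -- the union of all generating sets
  set S' : Set G := ⋃ k, A k with hS'def
  set Sgp : Subgroup G := Subgroup.closure S' with hSgpdef
  set H : Subgroup G := Sgp.topologicalClosure with hHdef
  have hHclosed : IsClosed (H : Set G) := Subgroup.isClosed_topologicalClosure Sgp
  have hSgpH : (Sgp : Set G) ⊆ (H : Set G) := Subgroup.le_topologicalClosure Sgp
  have hchain : ∀ j k, j ≤ k → A j ⊆ A k := by
    intro j k hjk
    induction hjk with
    | refl => exact Set.Subset.rfl
    | step _ ih => exact ih.trans (hAR _).1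
  have hC0H : C0 ⊆ (H : Set G) := by
    have hr : Set.range c ⊆ (H : Set G) := by
      rintro _ ⟨j, rfl⟩
      exact hSgpH (Subgroup.closure_mono (Set.subset_iUnion A j) (hAQ j).2.2)
    intro x hx
    have := closure_mono hr (hcdense hx)
    rwa [hHclosed.closure_eq] at this
  -- every element of G is in H
  have hHuniv : ∀ x : G, x ∈ (H : Set G) := by
    intro x
    set E : ℕ → Set G := fun k => {n : G | n ∈ (N k : Set G) ∧ x * n⁻¹ ∈ (H : Set G)} with hEdef
    have hEne : ∀ k, (E k).Nonempty := by
      intro k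
      obtain ⟨s, hsA, hsx⟩ := (hAQ k).2.1 x
      refine ⟨s⁻¹ * x, hsx, ?_⟩
      have hs : s ∈ (H : Set G) := hSgpH (Subgroup.closure_mono (Set.subset_iUnion A k) hsA)
      have heq : x * (s⁻¹ * x)⁻¹ = s := by group
      rw [heq]; exact hs
    have hEclosed : ∀ k, IsClosed (E k) := by
      intro k
      have h1 : IsClosed {n : G | n ∈ (N k : Set G)} := (N k).isClosed
      have h2 : IsClosed {n : G | x * n⁻¹ ∈ (H : Set G)} :=
        hHclosed.preimage (continuous_const.mul continuous_inv)
      exact h1.inter h2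
    have hEsub : ∀ k, E (k+1) ⊆ E k := fun k n hn => ⟨hNanti k hn.1, hn.2⟩
    obtain ⟨n, hn⟩ := IsCompact.nonempty_iInter_of_sequence_nonempty_isCompact_isClosed E
      hEsub hEne ((hEclosed 0).isCompact) hEclosed
    have hnN : ∀ k, n ∈ (N k : Set G) := fun k => (Set.mem_iInter.1 hn k).1
    have hnH : x * n⁻¹ ∈ (H : Set G) := (Set.mem_iInter.1 hn 0).2
    have hnC0 : n ∈ C0 := by
      have hmem : ∀ k : ℕ, ∃ cc ∈ C0, ∃ w ∈ Metric.ball (1:G) (1/(k+1)), cc * w = n :=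
        fun k => hNsmall k (hnN k)
      choose cs hcs ws hws heq using hmem
      have hwtend : Filter.Tendsto ws Filter.atTop (nhds (1:G)) := by
        rw [tendsto_iff_dist_tendsto_zero]
        refine squeeze_zero (fun k => dist_nonneg) (fun k => le_of_lt ?_)
          tendsto_one_div_add_atTop_nhds_zero_nat
        exact Metric.mem_ball.1 (hws k)
      have hctend : Filter.Tendsto cs Filter.atTop (nhds n) := by
        have hc_eq : cs = fun k => n * (ws k)⁻¹ := funext (fun k => by
          have h : cs k * ws k = n := heq k
          rw [← h]; group)
        rw [hc_eq]
        have hten : Filter.Tendsto (fun k => n * (ws k)⁻¹) Filter.atTop (nhds (n * (1:G)⁻¹)) :=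
          tendsto_const_nhds.mul hwtend.inv
        simpa using hten
      exact isClosed_connectedComponent.mem_of_tendsto hctend (Filter.Eventually.of_forall hcs)
    have hx : x = (x * n⁻¹) * n := by group
    rw [hx]
    exact Subgroup.mul_mem H hnH (hC0H hnC0)
  -- define the suitable set
  set S : Set G := S' \ {1} with hSdef
  have hSgen : Subgroup.closure S = Sgp := by
    refine le_antisymm (Subgroup.closure_mono Set.diff_subset) ?_
    refine (Subgroup.closure_le _).2 ?_
    intro x hx
    by_cases hx1 : x = 1
    · rw [hx1]; exact Subgroup.one_mem _
    · exact Subgroup.subset_closure ⟨hx, hx1⟩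
  -- finiteness of S outside any neighborhood of 1
  have hfin : ∀ U ∈ nhds (1:G), (S' \ U).Finite := by
    intro U hU
    obtain ⟨δ, hδpos, hδU⟩ := Metric.mem_nhds_iff.1 hU
    obtain ⟨k0, hk0⟩ := exists_nat_one_div_lt hδpos
    have hsub : ∀ j, A (k0 + j) ⊆ A k0 ∪ Metric.ball 1 δ := by
      intro j
      induction j with
      | zero => simp only [Nat.add_zero]; exact Set.subset_union_left
      | succ j ih =>
          intro y hy
          by_cases hyA : y ∈ A (k0 + j)
          · exact ih hyA
          · have hball := (hAR (k0+j)).2 ⟨hy, hyA⟩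
            right
            refine Metric.ball_subset_ball ?_ hball
            have h1 : (1:ℝ)/((k0:ℝ)+(j:ℝ)+1) ≤ 1/((k0:ℝ)+1) := by
              apply one_div_le_one_div_of_le
              · positivity
              · have : (0:ℝ) ≤ (j:ℝ) := Nat.cast_nonneg j
                linarith
            have h2 : ((k0:ℝ)+(j:ℝ)+1) = (((k0+j:ℕ):ℝ)+1) := by push_cast; ring
            rw [h2] at h1
            linarith [hk0]
    have hsub2 : S' \ Metric.ball 1 δ ⊆ A k0 := by
      rintro y ⟨hyS, hyB⟩
      obtain ⟨Ak, ⟨k, rfl⟩, hk⟩ := hyS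
      rcases le_or_gt k k0 with h | h
      · exact hchain k k0 h hk
      · have hy' : y ∈ A (k0 + (k - k0)) := by rwa [Nat.add_sub_cancel' (le_of_lt h)]
        rcases hsub (k - k0) hy' with h1 | h2
        · exact h1
        · exact absurd h2 hyB
    exact (hAQ k0).1.subset ((Set.diff_subset_diff_right hδU).trans hsub2)
  have hSfin : ∀ U ∈ nhds (1:G), (S \ U).Finite := fun U hU =>
    (hfin U hU).subset (fun y hy => ⟨hy.1.1, hy.2⟩)
  -- discreteness
  have hdisc : DiscreteTopology ↥S := by
    rw [discreteTopology_iff_isOpen_singleton]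
    rintro ⟨s, hsS⟩
    have hs1 : s ≠ 1 := fun h => hsS.2 (by rw [h]; rfl)
    obtain ⟨U, V, hUopen, hVopen, h1U, hsV, hUV⟩ := t2_separation (Ne.symm hs1)
    have hfinSU : (S \ U).Finite := hSfin U (hUopen.mem_nhds h1U)
    set W : Set G := V \ ((S \ U) \ {s}) with hWdef
    have hWopen : IsOpen W := hVopen.sdiff ((hfinSU.subset Set.diff_subset).isClosed)
    have hsW : s ∈ W := ⟨hsV, fun h => h.2 rfl⟩
    have key : ∀ y ∈ S, y ∈ W → y = s := by
      intro y hyS hyW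
      by_contra hne
      have hyU : y ∉ U := fun hyU => (Set.disjoint_left.1 hUV hyU) hyW.1
      exact hyW.2 ⟨⟨hyS, hyU⟩, hne⟩
    have hset : ({⟨s, hsS⟩} : Set ↥S) = Subtype.val ⁻¹' W := by
      ext q
      simp only [Set.mem_singleton_iff, Set.mem_preimage]
      constructor
      · rintro rfl; exact hsW
      · intro hq; exact Subtype.ext (key q q.2 hq)
    rw [hset]
    exact hWopen.preimage continuous_subtype_val
  -- closedness of S ∪ {1}
  have hclosed : IsClosed (S ∪ {1}) := by
    rw [← isOpen_compl_iff, isOpen_iff_forall_mem_open]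
    intro x hx
    have hx1 : x ≠ 1 := fun h => hx (Or.inr (by rw [h]; rfl))
    have hxS : x ∉ S := fun h => hx (Or.inl h)
    obtain ⟨U, V, hUopen, hVopen, h1U, hxV, hUV⟩ := t2_separation (Ne.symm hx1)
    have hfinSU : (S \ U).Finite := hSfin U (hUopen.mem_nhds h1U)
    refine ⟨V \ (S \ U), ?_, hVopen.sdiff hfinSU.isClosed, hxV, fun h => hxS h.1⟩
    intro y hy hymem
    rcases hymem with hyS | hy1
    · exact hy.2 ⟨hyS, fun hyU => (Set.disjoint_left.1 hUV hyU) hy.1⟩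
    · rw [Set.mem_singleton_iff] at hy1
      exact (Set.disjoint_left.1 hUV h1U) (hy1 ▸ hy.1)
  -- density
  have hdense : Dense (Subgroup.closure S : Set G) := by
    rw [hSgen, dense_iff_closure_eq, ← Subgroup.topologicalClosure_coe]
    exact Set.eq_univ_of_forall hHuniv
  exact ⟨S, hdisc, hclosed, hdense⟩
end

section
/- Let G be a separable left precompact Hausdorff topological group in which {1} is a Gδ-set (i.e., G has countable pseudocharacter), and let P be a countable dense subgroup of G. Then there exists a subset L of P such that L is discrete in its subspace topology, L is closed in G ∖ {1}, and the subgroup generated by L equals P. In particular, L is a suitable set for both P and G. -/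
open Pointwise

/-- Let `G` be a separable left precompact Hausdorff topological group in which
`{1}` is a Gδ-set, and let `P` be a countable dense subgroup of `G`. Then there
exists `L ⊆ P` which is discrete in its subspace topology, closed in `G \ {1}`,
and generates exactly `P`. -/
theorem exists_suitable_set_in_countable_dense_subgroup
    {G : Type*} [Group G] [TopologicalSpace G] [IsTopologicalGroup G] [T2Space G]
    [TopologicalSpace.SeparableSpace G]
    (hpre : ∀ U ∈ nhds (1 : G), ∃ F : Set G, F.Finite ∧ F * U = Set.univ)
    (hGδ : IsGδ ({1} : Set G))
    (P : Subgroup G) (hPc : (P : Set G).Countable) (hPd : Dense (P : Set G)) :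
    ∃ L : Set G, L ⊆ (P : Set G) ∧ DiscreteTopology L ∧
      IsClosed (Subtype.val ⁻¹' L : Set (({1}ᶜ : Set G))) ∧
      Subgroup.closure L = P := by
  classical
  -- Step 0: a sequence of open sets whose intersection is {1}
  obtain ⟨U, hUopen, hUeq⟩ := hGδ.eq_iInter_nat
  have hU1 : ∀ n, (1 : G) ∈ U n := by
    intro n
    have : (1 : G) ∈ ⋂ n, U n := by rw [← hUeq]; exact Set.mem_singleton 1
    exact Set.mem_iInter.1 this n
  -- closed neighborhoods inside the U n
  have hCn : ∀ n : ℕ, ∃ C : Set G, C ∈ nhds (1 : G) ∧ IsClosed C ∧ C ⊆ U n := fun n =>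
    exists_mem_nhds_isClosed_subset ((hUopen n).mem_nhds (hU1 n))
  choose C hCmem hCclosed hCsub using hCn
  -- the decreasing sequence V n
  set V : ℕ → Set G := fun n => ⋂ i ∈ Finset.range (n + 1), C i with hVdef
  have hVmem : ∀ n, V n ∈ nhds (1 : G) := fun n =>
    (Filter.biInter_finset_mem _).2 fun i _ => hCmem i
  have hVclosed : ∀ n, IsClosed (V n) := fun n =>
    isClosed_biInter fun i _ => hCclosed i
  have hVmono : ∀ {m n : ℕ}, m ≤ n → V n ⊆ V m := by
    intro m n hmn x hx
    simp only [hVdef, Set.mem_iInter, Finset.mem_range] at hx ⊢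
    exact fun i hi => hx i (lt_of_lt_of_le hi (by omega))
  have hVescape : ∀ x : G, x ≠ 1 → ∃ m, x ∉ V m := by
    intro x hx
    have : x ∉ ⋂ n, U n := by rw [← hUeq]; simpa using hx
    obtain ⟨n, hn⟩ := by simpa [Set.mem_iInter] using this
    refine ⟨n, fun hxV => hn ?_⟩
    have : x ∈ C n := by
      simp only [hVdef, Set.mem_iInter, Finset.mem_range] at hxV
      exact hxV n (by omega)
    exact hCsub n this
  -- Lemma A: finite covers by translates of neighborhoods with centers in P
  have lemA : ∀ W ∈ nhds (1 : G), ∃ F : Set G, F.Finite ∧ F ⊆ (P : Set G) ∧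
      ∀ x : G, ∃ q ∈ F, q⁻¹ * x ∈ W := by
    intro W hW
    obtain ⟨S, hSmem, _hScl, hSsymm, hSmul⟩ := exists_closed_nhds_one_inv_eq_mul_subset hW
    have hSint : (1 : G) ∈ interior S := mem_interior_iff_mem_nhds.2 hSmem
    obtain ⟨F0, hF0fin, hF0cov⟩ := hpre (interior S) (interior_mem_nhds.2 hSmem)
    have hpick : ∀ f : G, ∃ p : G, p ∈ (P : Set G) ∧ f⁻¹ * p ∈ interior S := by
      intro f
      have hne : ((f * ·) '' interior S).Nonempty := ⟨f, 1, hSint, mul_one f⟩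
      have hop : IsOpen ((f * ·) '' interior S) := (isOpenMap_mul_left f) _ isOpen_interior
      obtain ⟨p, hpP, hpmem⟩ := hPd.exists_mem_open hop hne
      obtain ⟨y, hy, rfl⟩ := hpmem
      exact ⟨f * y, hpP, by simpa using hy⟩
    choose p hpP hpS using hpick
    refine ⟨p '' F0, hF0fin.image p, ?_, ?_⟩
    · rintro q ⟨f, _, rfl⟩; exact hpP f
    · intro x
      have hx : x ∈ F0 * interior S := by rw [hF0cov]; trivial
      obtain ⟨f, hf, v, hv, rfl⟩ := hx
      refine ⟨p f, ⟨f, hf, rfl⟩, ?_⟩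
      have h1 : (f⁻¹ * p f)⁻¹ ∈ S := by
        rw [← hSsymm]; exact Set.inv_mem_inv.2 (interior_subset (hpS f))
      have h2 : (p f)⁻¹ * (f * v) = (f⁻¹ * p f)⁻¹ * v := by group
      rw [h2]
      exact hSmul (Set.mul_mem_mul h1 (interior_subset hv))
  -- the finite approximating sets F n ⊆ P
  choose F hFfin hFP hFcov using fun n => lemA (V n) (hVmem n)
  -- decomposition: every x is g * r with g ∈ F n and r ∈ V n
  choose g hgF hgV using fun n (x : G) => hFcov n x
  set r : ℕ → G → G := fun n x => (g n x)⁻¹ * x with hrdef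
  have hgr : ∀ n (x : G), g n x * r n x = x := by
    intro n x; simp [hrdef]
  have hrP : ∀ n x, x ∈ (P : Set G) → r n x ∈ (P : Set G) := by
    intro n x hx
    exact mul_mem (inv_mem (hFP n (hgF n x))) hx
  have hrV : ∀ n x, r n x ∈ V n := fun n x => hgV n x
  -- enumeration of P
  obtain ⟨e, he⟩ := Set.Countable.exists_eq_range hPc ⟨1, P.one_mem⟩
  -- the suitable set L
  set L : Set G :=
    (F 0 ∪ (⋃ n, (r n) '' F (n + 1)) ∪ (⋃ k, {r k (e k)})) \ {1} with hLdef
  have hL1 : ∀ x ∈ L, x ≠ (1 : G) := fun x hx => hx.2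
  have hLP : L ⊆ (P : Set G) := by
    rintro x ⟨hx, -⟩
    rcases hx with (hx | hx) | hx
    · exact hFP 0 hx
    · obtain ⟨n, f, hf, rfl⟩ := by simpa using hx
      exact hrP n f (hFP (n + 1) hf)
    · obtain ⟨k, hk⟩ := by simpa using hx
      subst hk
      exact hrP k (e k) (by rw [he]; exact Set.mem_range_self k)
  -- finiteness of L outside V m
  have hfin : ∀ m : ℕ, (L \ V m).Finite := by
    intro m
    have hsub : L \ V m ⊆ F 0 ∪ (⋃ n ∈ Set.Iio m, (r n) '' F (n + 1)) ∪
        (⋃ k ∈ Set.Iio m, {r k (e k)}) := by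
      rintro x ⟨⟨hx, -⟩, hxV⟩
      rcases hx with (hx | hx) | hx
      · exact Or.inl (Or.inl hx)
      · obtain ⟨n, f, hf, rfl⟩ := by simpa using hx
        refine Or.inl (Or.inr ?_)
        have hnm : n < m := by
          by_contra h
          exact hxV (hVmono (le_of_not_gt h) (hrV n f))
        exact Set.mem_biUnion hnm ⟨f, hf, rfl⟩
      · obtain ⟨k, hk⟩ := by simpa using hx
        refine Or.inr ?_
        have hkm : k < m := by
          by_contra h
          rw [← hk] at hxV
          exact hxV (hVmono (le_of_not_gt h) (hrV k (e k)))
        exact Set.mem_biUnion hkm (by rw [← hk]; rfl)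
    refine Set.Finite.subset ?_ hsub
    refine (Set.Finite.union (Set.Finite.union (hFfin 0) ?_) ?_)
    · exact (Set.finite_Iio m).biUnion fun n _ => (hFfin (n + 1)).image _
    · exact (Set.finite_Iio m).biUnion fun k _ => Set.finite_singleton _
  -- isolation: every x ≠ 1 has an open neighborhood meeting L only at x
  have hiso : ∀ x : G, x ≠ 1 → ∃ N : Set G, IsOpen N ∧ x ∈ N ∧ N ∩ L ⊆ {x} := by
    intro x hx
    obtain ⟨m, hm⟩ := hVescape x hx
    set T : Set G := (L \ V m) \ {x} with hTdef
    have hTfin : T.Finite := (hfin m).subset Set.diff_subset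
    refine ⟨(V m)ᶜ ∩ Tᶜ, (hVclosed m).isOpen_compl.inter hTfin.isClosed.isOpen_compl,
      ⟨hm, fun hT => hT.2 rfl⟩, ?_⟩
    rintro y ⟨⟨hy1, hy2⟩, hyL⟩
    by_contra hxy
    exact hy2 ⟨⟨hyL, hy1⟩, hxy⟩
  -- closure of L is contained in L ∪ {1}
  have hclos : closure L ⊆ L ∪ {1} := by
    intro x hx
    by_cases hx1 : x = 1
    · exact Or.inr hx1
    · obtain ⟨N, hNo, hxN, hNL⟩ := hiso x hx1
      obtain ⟨y, hyN, hyL⟩ := mem_closure_iff.1 hx N hNo hxN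
      have : y = x := hNL ⟨hyN, hyL⟩
      exact Or.inl (this ▸ hyL)
  refine ⟨L, hLP, ?_, ?_, ?_⟩
  · -- discreteness
    rw [discreteTopology_subtype_iff]
    intro x hx
    obtain ⟨N, hNo, hxN, hNL⟩ := hiso x (hL1 x hx)
    rw [Filter.inf_principal_eq_bot]
    refine Filter.mem_of_superset (diff_mem_nhdsWithin_compl (hNo.mem_nhds hxN) {x}) ?_
    intro y hy hyL
    exact hy.2 (hNL ⟨hy.1, hyL⟩)
  · -- closedness in G \ {1}
    have heq : (Subtype.val ⁻¹' L : Set (({1}ᶜ : Set G))) = Subtype.val ⁻¹' closure L := by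
      ext x
      simp only [Set.mem_preimage]
      constructor
      · exact fun h => subset_closure h
      · intro h
        rcases hclos h with h | h
        · exact h
        · exact absurd h x.2
    rw [heq]
    exact isClosed_closure.preimage continuous_subtype_val
  · -- the generated subgroup is exactly P
    apply le_antisymm
    · exact (Subgroup.closure_le P).2 hLP
    · intro q hq
      have hFgen : ∀ n, ∀ f ∈ F n, f ∈ Subgroup.closure L := by
        intro n
        induction n with
        | zero =>
          intro f hf
          by_cases hf1 : f = 1
          · exact hf1 ▸ (Subgroup.closure L).one_mem
          · exact Subgroup.subset_closure ⟨Or.inl (Or.inl hf), hf1⟩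
        | succ n ih =>
          intro f hf
          have hgmem : g n f ∈ Subgroup.closure L := ih (g n f) (hgF n f)
          have hrmem : r n f ∈ Subgroup.closure L := by
            by_cases hr1 : r n f = 1
            · exact hr1 ▸ (Subgroup.closure L).one_mem
            · refine Subgroup.subset_closure ⟨Or.inl (Or.inr ?_), hr1⟩
              exact Set.mem_iUnion.2 ⟨n, ⟨f, hf, rfl⟩⟩
          have := mul_mem hgmem hrmem
          rwa [hgr n f] at this
      have hqe : q ∈ Set.range e := by rw [← he]; exact hq
      obtain ⟨k, rfl⟩ := hqe
      have hgmem : g k (e k) ∈ Subgroup.closure L := hFgen k _ (hgF k (e k))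
      have hrmem : r k (e k) ∈ Subgroup.closure L := by
        by_cases hr1 : r k (e k) = 1
        · exact hr1 ▸ (Subgroup.closure L).one_mem
        · refine Subgroup.subset_closure ⟨Or.inr ?_, hr1⟩
          exact Set.mem_iUnion.2 ⟨k, rfl⟩
      have := mul_mem hgmem hrmem
      rwa [hgr k (e k)] at this
end

section
/- Every separable metrizable topological group G has a suitable set; that is, there exists a subset S of G such that S is discrete in its subspace topology, S ∪ {1} is closed in G, and the subgroup generated by S is dense in G. -/
/-- Separation invariant: any two distinct elements of `F` are at "relative" distance
at least half the smaller of their norms. -/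
def SepInv {G : Type*} [Group G] [MetricSpace G] (F : Set G) : Prop :=
  ∀ s ∈ F, ∀ t ∈ F, s ≠ t →
    min (dist s 1) (dist t 1) / 2 ≤ max (dist (s⁻¹ * t) 1) (dist (t⁻¹ * s) 1)

/-- Reduction lemma: any `u` can be written as `g * v` with `g` in the subgroup generated by
`F` and `v` either trivial or "non-colliding" with `F`. -/
theorem sep_reduce {G : Type*} [Group G] [MetricSpace G] [IsTopologicalGroup G]
    (F : Finset G) (h1 : (1 : G) ∉ F) (u : G) :
    ∃ g v : G, g ∈ Subgroup.closure (F : Set G) ∧ u = g * v ∧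
      (v = 1 ∨ (v ≠ 1 ∧ ∀ s ∈ F, dist v 1 / 2 ≤ dist (s⁻¹ * v) 1)) := by
  obtain ⟨δ, hδpos, hδ⟩ : ∃ δ > 0, ∀ a b : G, dist a 1 < δ → dist b 1 < δ →
      a * b⁻¹ ∉ (F : Set G) := by
    have hU : IsOpen ((F : Set G)ᶜ) := F.finite_toSet.isClosed.isOpen_compl
    have hc : Continuous fun p : G × G => p.1 * p.2⁻¹ := by continuity
    have hmem : (fun p : G × G => p.1 * p.2⁻¹) ⁻¹' ((F : Set G)ᶜ) ∈ nhds ((1 : G), (1 : G)) := by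
      refine (hU.preimage hc).mem_nhds ?_
      simp [h1]
    rw [Metric.mem_nhds_iff] at hmem
    obtain ⟨ε, hε, hball⟩ := hmem
    refine ⟨ε, hε, fun a b ha hb => ?_⟩
    have : ((a, b) : G × G) ∈ Metric.ball ((1 : G), (1 : G)) ε := by
      rw [Metric.mem_ball, Prod.dist_eq]
      exact max_lt (by simpa [Metric.mem_ball] using ha) (by simpa [Metric.mem_ball] using hb)
    exact hball this
  have key : ∀ k : ℕ, ∀ u : G, dist u 1 < δ * 2 ^ k →
      ∃ g v : G, g ∈ Subgroup.closure (F : Set G) ∧ u = g * v ∧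
        (v = 1 ∨ (v ≠ 1 ∧ ∀ s ∈ F, dist v 1 / 2 ≤ dist (s⁻¹ * v) 1)) := by
    intro k
    induction k with
    | zero =>
      intro u hu
      rw [pow_zero, mul_one] at hu
      refine ⟨1, u, Subgroup.one_mem _, (one_mul u).symm, ?_⟩
      rcases eq_or_ne u 1 with h | h
      · exact Or.inl h
      · refine Or.inr ⟨h, fun s hs => ?_⟩
        by_contra hlt
        push_neg at hlt
        have hu1 : 0 ≤ dist u 1 := dist_nonneg
        have h2 : dist (s⁻¹ * u) 1 < δ := by linarith
        have := hδ u (s⁻¹ * u) hu h2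
        apply this
        have he : u * (s⁻¹ * u)⁻¹ = s := by group
        rw [he]
        exact_mod_cast hs
    | succ k ih =>
      intro u hu
      by_cases hcol : ∃ s ∈ F, dist (s⁻¹ * u) 1 < dist u 1 / 2
      · obtain ⟨s, hs, hlt⟩ := hcol
        have hrec : dist (s⁻¹ * u) 1 < δ * 2 ^ k := by
          have : (δ * 2 ^ (k + 1)) / 2 = δ * 2 ^ k := by ring
          nlinarith [dist_nonneg (x := s⁻¹ * u) (y := (1 : G))]
        obtain ⟨g, v, hg, huv, hv⟩ := ih (s⁻¹ * u) hrec
        refine ⟨s * g, v, mul_mem (Subgroup.subset_closure (by exact_mod_cast hs)) hg, ?_, hv⟩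
        rw [mul_assoc, ← huv, mul_inv_cancel_left]
      · push_neg at hcol
        refine ⟨1, u, Subgroup.one_mem _, (one_mul u).symm, ?_⟩
        rcases eq_or_ne u 1 with h | h
        · exact Or.inl h
        · exact Or.inr ⟨h, hcol⟩
  obtain ⟨k, hk⟩ := exists_nat_gt (dist u 1 / δ)
  have h2k : dist u 1 / δ < (2 : ℝ) ^ k := by
    refine hk.trans_le ?_
    exact_mod_cast (Nat.lt_two_pow_self (n := k)).le
  exact key k u (by rw [div_lt_iff₀ hδpos] at h2k; linarith)

/-- One construction step: extend `F` keeping the invariant so that `u` lands in the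
generated subgroup. -/
theorem sep_step {G : Type*} [Group G] [MetricSpace G] [IsTopologicalGroup G]
    (F : Finset G) (h1 : (1 : G) ∉ F) (hJ : SepInv (F : Set G)) (u : G) :
    ∃ F' : Finset G, F ⊆ F' ∧ (1 : G) ∉ F' ∧ SepInv (F' : Set G) ∧
      u ∈ Subgroup.closure (F' : Set G) := by
  classical
  obtain ⟨g, v, hg, huv, hv⟩ := sep_reduce F h1 u
  rcases hv with rfl | ⟨hv1, hvsep⟩
  · exact ⟨F, Finset.Subset.refl F, h1, hJ, by rw [huv, mul_one]; exact hg⟩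
  · refine ⟨insert v F, Finset.subset_insert _ _, ?_, ?_, ?_⟩
    · simp only [Finset.mem_insert, not_or]
      exact ⟨fun h => hv1 h.symm, h1⟩
    · intro s hs t ht hne
      simp only [Finset.coe_insert, Set.mem_insert_iff] at hs ht
      have hmin : ∀ a b : G, min (dist a 1) (dist b 1) / 2 ≤ dist b 1 / 2 := by
        intro a b
        have := min_le_right (dist a 1) (dist b 1)
        linarith
      rcases hs with rfl | hs <;> rcases ht with rfl | ht
      · exact absurd rfl hne
      · have h := hvsep t ht
        refine le_trans ?_ (le_max_right _ _)
        have := min_le_left (dist s 1) (dist t 1)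
        linarith
      · have h := hvsep s hs
        refine le_trans ?_ (le_max_left _ _)
        exact (hmin s t).trans h
      · exact hJ s hs t ht hne
    · have hcl : Subgroup.closure (F : Set G) ≤ Subgroup.closure ((insert v F : Finset G) : Set G) := by
        apply Subgroup.closure_mono
        exact_mod_cast Finset.subset_insert v F
      rw [huv]
      exact mul_mem (hcl hg) (Subgroup.subset_closure (by simp))

theorem aux_suitable {G : Type*} [Group G] [MetricSpace G] [IsTopologicalGroup G]
    [TopologicalSpace.SeparableSpace G] :
    ∃ S : Set G, IsSuitable S := by
  haveI : Nonempty G := ⟨1⟩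
  set d : ℕ → G := TopologicalSpace.denseSeq G with hd
  have step' : ∀ (F : {F : Finset G // (1 : G) ∉ F ∧ SepInv (F : Set G)}) (u : G),
      ∃ F' : {F : Finset G // (1 : G) ∉ F ∧ SepInv (F : Set G)},
        F.1 ⊆ F'.1 ∧ u ∈ Subgroup.closure (F'.1 : Set G) := by
    rintro ⟨F, hF1, hF2⟩ u
    obtain ⟨F', ha, hb, hc, he⟩ := sep_step F hF1 hF2 u
    exact ⟨⟨F', hb, hc⟩, ha, he⟩
  choose f hf1 hf2 using step'
  let T : ℕ → {F : Finset G // (1 : G) ∉ F ∧ SepInv (F : Set G)} :=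
    fun n => Nat.rec ⟨∅, by simp, by intro s hs; simp at hs⟩ (fun n Fh => f Fh (d n)) n
  have hTsucc : ∀ n, (T n).1 ⊆ (T (n + 1)).1 := fun n => hf1 (T n) (d n)
  have hTmono : ∀ m n, m ≤ n → (T m).1 ⊆ (T n).1 := by
    intro m n h
    induction h with
    | refl => exact Finset.Subset.refl _
    | step h ih => exact ih.trans (hTsucc _)
  set S : Set G := ⋃ n, ((T n).1 : Set G) with hS
  have hSsub : ∀ n, ((T n).1 : Set G) ⊆ S := fun n => Set.subset_iUnion (fun n => ((T n).1 : Set G)) n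
  have h1S : (1 : G) ∉ S := by
    rw [hS]
    simp only [Set.mem_iUnion, not_exists]
    intro n h
    exact (T n).2.1 (by exact_mod_cast h)
  have hJS : SepInv S := by
    intro s hs t ht hne
    rw [hS] at hs ht
    simp only [Set.mem_iUnion] at hs ht
    obtain ⟨a, ha⟩ := hs
    obtain ⟨b, hb⟩ := ht
    have hsa : s ∈ (T (max a b)).1 := hTmono a _ (le_max_left a b) (by exact_mod_cast ha)
    have htb : t ∈ (T (max a b)).1 := hTmono b _ (le_max_right a b) (by exact_mod_cast hb)
    exact (T (max a b)).2.2 s (by exact_mod_cast hsa) t (by exact_mod_cast htb) hne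
  have hdense : Dense (Subgroup.closure S : Set G) := by
    have hsub : Set.range d ⊆ (Subgroup.closure S : Set G) := by
      rintro _ ⟨n, rfl⟩
      have h := hf2 (T n) (d n)
      have : Subgroup.closure ((T (n + 1)).1 : Set G) ≤ Subgroup.closure S :=
        Subgroup.closure_mono (hSsub (n + 1))
      exact this h
    exact Dense.mono hsub (TopologicalSpace.denseRange_denseSeq G)
  have key : ∀ x : G, x ≠ 1 → ∃ ε > 0, ε ≤ dist x 1 / 2 ∧
      ∀ s ∈ S, ∀ t ∈ S, dist s x < ε → dist t x < ε → s = t := by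
    intro x hx
    have hr : 0 < dist x 1 := dist_pos.mpr hx
    have hc : Continuous fun p : G × G => p.1⁻¹ * p.2 := by continuity
    have hmem : (fun p : G × G => p.1⁻¹ * p.2) ⁻¹' (Metric.ball (1 : G) (dist x 1 / 8)) ∈
        nhds ((x, x) : G × G) := by
      refine (Metric.isOpen_ball.preimage hc).mem_nhds ?_
      simp only [Set.mem_preimage, inv_mul_cancel, Metric.mem_ball, dist_self]
      linarith
    rw [Metric.mem_nhds_iff] at hmem
    obtain ⟨ε₁, hε₁, hball⟩ := hmem
    refine ⟨min ε₁ (dist x 1 / 2), by positivity, min_le_right _ _, ?_⟩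
    intro s hsS t htS hs ht
    by_contra hne
    have hJ := hJS s hsS t htS hne
    have hνs : dist x 1 / 2 < dist s 1 := by
      have h1 := dist_triangle x s 1
      have h2 : dist s x < dist x 1 / 2 := lt_of_lt_of_le hs (min_le_right _ _)
      rw [dist_comm x s] at h1
      linarith
    have hνt : dist x 1 / 2 < dist t 1 := by
      have h1 := dist_triangle x t 1
      have h2 : dist t x < dist x 1 / 2 := lt_of_lt_of_le ht (min_le_right _ _)
      rw [dist_comm x t] at h1
      linarith
    have hpair : ∀ a b : G, dist a x < min ε₁ (dist x 1 / 2) → dist b x < min ε₁ (dist x 1 / 2) →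
        dist (a⁻¹ * b) 1 < dist x 1 / 8 := by
      intro a b hax hbx
      have : ((a, b) : G × G) ∈ Metric.ball ((x, x) : G × G) ε₁ := by
        rw [Metric.mem_ball, Prod.dist_eq]
        exact max_lt (lt_of_lt_of_le hax (min_le_left _ _)) (lt_of_lt_of_le hbx (min_le_left _ _))
      have := hball this
      simpa [Metric.mem_ball] using this
    have h1 := hpair s t hs ht
    have h2 := hpair t s ht hs
    have hmax : max (dist (s⁻¹ * t) 1) (dist (t⁻¹ * s) 1) < dist x 1 / 8 := max_lt h1 h2
    have hmin : dist x 1 / 2 ≤ min (dist s 1) (dist t 1) := le_min hνs.le hνt.le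
    linarith [hJ, hmax, hmin]
  refine ⟨S, ?_, ?_, hdense⟩
  · rw [discreteTopology_iff_isOpen_singleton]
    rintro ⟨s, hsS⟩
    have hs1 : s ≠ 1 := fun h => h1S (h ▸ hsS)
    obtain ⟨ε, hε, -, hsep⟩ := key s hs1
    have hset : ({⟨s, hsS⟩} : Set S) = Subtype.val ⁻¹' Metric.ball s ε := by
      ext ⟨t, htS⟩
      simp only [Set.mem_singleton_iff, Subtype.ext_iff, Set.mem_preimage, Metric.mem_ball]
      constructor
      · rintro rfl; simpa using hε
      · intro h
        exact hsep t htS s hsS h (by simpa using hε)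
    rw [hset]
    exact Metric.isOpen_ball.preimage continuous_subtype_val
  · rw [← isOpen_compl_iff, Metric.isOpen_iff]
    intro x hx
    simp only [Set.mem_compl_iff, Set.mem_union, Set.mem_singleton_iff, not_or] at hx
    obtain ⟨hxS, hx1⟩ := hx
    have hr : 0 < dist x 1 := dist_pos.mpr hx1
    obtain ⟨ε, hε, hεle, hsep⟩ := key x hx1
    have h1ball : ∀ ε' ≤ ε, (1 : G) ∉ Metric.ball x ε' := by
      intro ε' hε' h
      rw [Metric.mem_ball, dist_comm] at h
      linarith
    by_cases hex : ∃ s ∈ S, dist s x < ε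
    · obtain ⟨s₀, hs₀S, hs₀⟩ := hex
      have hs₀x : s₀ ≠ x := fun h => hxS (h ▸ hs₀S)
      have hdxs : 0 < dist x s₀ := dist_pos.mpr (Ne.symm hs₀x)
      refine ⟨min ε (dist x s₀), by positivity, ?_⟩
      intro y hy
      rw [Metric.mem_ball] at hy
      simp only [Set.mem_compl_iff, Set.mem_union, Set.mem_singleton_iff, not_or]
      constructor
      · intro hyS
        have hyx : dist y x < ε := lt_of_lt_of_le hy (min_le_left _ _)
        have : y = s₀ := hsep y hyS s₀ hs₀S hyx hs₀
        rw [this] at hy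
        have := lt_of_lt_of_le hy (min_le_right _ _)
        rw [dist_comm] at this
        exact lt_irrefl _ this
      · intro hy1
        subst hy1
        exact h1ball (min ε (dist x s₀)) (min_le_left _ _) (by rwa [Metric.mem_ball])
    · push_neg at hex
      refine ⟨ε, hε, ?_⟩
      intro y hy
      rw [Metric.mem_ball] at hy
      simp only [Set.mem_compl_iff, Set.mem_union, Set.mem_singleton_iff, not_or]
      refine ⟨fun hyS => absurd hy (not_lt.mpr (hex y hyS)), ?_⟩
      intro hy1
      subst hy1
      exact h1ball ε le_rfl (by rwa [Metric.mem_ball])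

/-- Every separable metrizable topological group has a suitable set. -/
theorem separable_metrizable_group_has_suitable_set
    {G : Type*} [Group G] [TopologicalSpace G] [IsTopologicalGroup G]
    [TopologicalSpace.SeparableSpace G] [TopologicalSpace.MetrizableSpace G] :
    ∃ S : Set G, IsSuitable S := by
  letI : MetricSpace G := TopologicalSpace.metrizableSpaceMetric G
  exact aux_suitable
end

section
/- For all complex numbers a, b, c with |a| < 1, |b| < 1 and |c| < 1, the Möbius addition satisfies the left gyroassociative law: a ⊕ (b ⊕ c) = (a ⊕ b) ⊕ (((1 + a·conj(b))/(1 + conj(a)·b))·c), where x ⊕ y = (x + y)/(1 + conj(x)·y). -/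
/-- Möbius addition on the complex plane. -/
noncomputable def mobiusAdd (x y : ℂ) : ℂ := (x + y) / (1 + (starRingEnd ℂ) x * y)

lemma one_add_conj_mul_ne_zero {x y : ℂ} (hx : ‖x‖ < 1) (hy : ‖y‖ < 1) :
    1 + (starRingEnd ℂ) x * y ≠ 0 := by
  intro h
  have h2 : (starRingEnd ℂ) x * y = -1 := by linear_combination h
  have : ‖((starRingEnd ℂ) x * y)‖ = 1 := by rw [h2]; simp
  rw [norm_mul, Complex.norm_conj] at this
  nlinarith [norm_nonneg x, norm_nonneg y]

lemma key_normSq (a b : ℂ) :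
    Complex.normSq (1 + (starRingEnd ℂ) a * b) - Complex.normSq (a + b)
      = (1 - Complex.normSq a) * (1 - Complex.normSq b) := by
  simp [Complex.normSq_apply, Complex.add_re, Complex.add_im, Complex.mul_re, Complex.mul_im]
  ring

lemma abs_add_lt {a b : ℂ} (ha : ‖a‖ < 1) (hb : ‖b‖ < 1) :
    ‖(a + b)‖ < ‖(1 + (starRingEnd ℂ) a * b)‖ := by
  have h1 : Complex.normSq a < 1 := by
    rw [← Complex.sq_norm]; nlinarith [norm_nonneg a]
  have h2 : Complex.normSq b < 1 := by
    rw [← Complex.sq_norm]; nlinarith [norm_nonneg b]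
  have := key_normSq a b
  have hlt : Complex.normSq (a + b) < Complex.normSq (1 + (starRingEnd ℂ) a * b) := by nlinarith
  rw [← Complex.sq_norm, ← Complex.sq_norm] at hlt
  nlinarith [norm_nonneg (a+b), norm_nonneg (1 + (starRingEnd ℂ) a * b)]

lemma N_ne_zero {a b c : ℂ} (ha : ‖a‖ < 1) (hb : ‖b‖ < 1)
    (hc : ‖c‖ < 1) :
    1 + (starRingEnd ℂ) a * b + (starRingEnd ℂ) a * c + (starRingEnd ℂ) b * c ≠ 0 := by
  intro h
  have h2 : ((starRingEnd ℂ) a + (starRingEnd ℂ) b) * c = -(1 + (starRingEnd ℂ) a * b) := by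
    linear_combination h
  have habs : ‖(((starRingEnd ℂ) a + (starRingEnd ℂ) b) * c)‖
      = ‖(1 + (starRingEnd ℂ) a * b)‖ := by rw [h2]; exact norm_neg _
  rw [norm_mul] at habs
  have hab : ‖((starRingEnd ℂ) a + (starRingEnd ℂ) b)‖ = ‖(a + b)‖ := by
    rw [← map_add, Complex.norm_conj]
  rw [hab] at habs
  have h3 : ‖(a + b)‖ < ‖(1 + (starRingEnd ℂ) a * b)‖ :=
    abs_add_lt ha hb
  nlinarith [mul_le_of_le_one_right (norm_nonneg (a+b)) (le_of_lt hc)]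

/-- The left gyroassociative law for Möbius addition on the open unit disk:
`a ⊕ (b ⊕ c) = (a ⊕ b) ⊕ (gyr[a,b] c)` where
`gyr[a,b] c = ((1 + a·conj b)/(1 + conj a·b))·c`. -/
theorem mobius_left_gyroassociative (a b c : ℂ)
    (ha : ‖a‖ < 1) (hb : ‖b‖ < 1) (hc : ‖c‖ < 1) :
    mobiusAdd a (mobiusAdd b c) =
      mobiusAdd (mobiusAdd a b)
        ((1 + a * (starRingEnd ℂ) b) / (1 + (starRingEnd ℂ) a * b) * c) := by
  have hab : (1 : ℂ) + (starRingEnd ℂ) a * b ≠ 0 := one_add_conj_mul_ne_zero ha hb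
  have hbc : (1 : ℂ) + (starRingEnd ℂ) b * c ≠ 0 := one_add_conj_mul_ne_zero hb hc
  have hba : (1 : ℂ) + a * (starRingEnd ℂ) b ≠ 0 := by
    intro h
    apply hab
    have := congrArg (starRingEnd ℂ) h
    simpa using this
  have hN := N_ne_zero ha hb hc
  have hbc' : (1 : ℂ) + c * (starRingEnd ℂ) b ≠ 0 := by rwa [mul_comm]
  have hab' : (1 : ℂ) + b * (starRingEnd ℂ) a ≠ 0 := by rwa [mul_comm]
  have hba' : (1 : ℂ) + (starRingEnd ℂ) b * a ≠ 0 := by rwa [mul_comm]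
  have e1 : 1 + (starRingEnd ℂ) a * ((b + c) / (1 + (starRingEnd ℂ) b * c))
      = (1 + (starRingEnd ℂ) a * b + (starRingEnd ℂ) a * c + (starRingEnd ℂ) b * c)
        / (1 + (starRingEnd ℂ) b * c) := by
    field_simp
    ring
  have e2 : 1 + (starRingEnd ℂ) ((a + b) / (1 + (starRingEnd ℂ) a * b))
      * ((1 + a * (starRingEnd ℂ) b) / (1 + (starRingEnd ℂ) a * b) * c)
      = (1 + (starRingEnd ℂ) a * b + (starRingEnd ℂ) a * c + (starRingEnd ℂ) b * c)
        / (1 + (starRingEnd ℂ) a * b) := by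
    simp only [map_div₀, map_add, map_mul, map_one, Complex.conj_conj]
    field_simp
    ring
  unfold mobiusAdd
  rw [e1, e2, div_eq_div_iff (div_ne_zero hN hbc) (div_ne_zero hN hab)]
  field_simp
  ring
end
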